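/- arXiv:2501.07522 — 2 statements merged into one kernel-verified Lean document; each statement's English description precedes it below -/
import Mathlib

section
/- The element y_0 x_0 y_0^{−1} (product taken in Homeo(C_n) with the convention fg = g∘f) belongs to G_0(n), while the element y_0^{−1} x_{0[0]} y_0 does not belong to Gy(n). -/
namespace LM

/-- Group structure on the self-homeomorphisms of a space, with the convention
`(f * g) ξ = f (g ξ)`.  A product `f₁ f₂ ⋯ f_k` in the paper's convention
(`fg = g ∘ f`) corresponds to `f_k * ⋯ * f₂ * f₁` here. -/
instance homeoGroup {X : Type*} [TopologicalSpace X] : Group (X ≃ₜ X) where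
  mul f g := g.trans f
  one := Homeomorph.refl X
  inv := Homeomorph.symm
  mul_assoc _ _ _ := Homeomorph.ext fun _ => rfl
  one_mul _ := Homeomorph.ext fun _ => rfl
  mul_one _ := Homeomorph.ext fun _ => rfl
  inv_mul_cancel f := Homeomorph.ext fun x => f.symm_apply_apply x

/-- The `n`-adic Cantor set `{0, …, n-1}^ℕ` with the product topology
(`Fin n` being discrete). -/
abbrev C (n : ℕ) : Type := ℕ → Fin n

/-- The group of self-homeomorphisms of the `n`-adic Cantor set. -/
abbrev Γ (n : ℕ) : Type := C n ≃ₜ C n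

/-- Prepend a letter to an infinite sequence. -/
def cons {n : ℕ} (a : Fin n) (s : C n) : C n
  | 0 => a
  | i + 1 => s i

/-- Prepend a finite word to an infinite sequence. -/
def wcons {n : ℕ} (w : List (Fin n)) (s : C n) : C n := w.foldr cons s

/-- The sum of the letters of a finite word. -/
def dsum {n : ℕ} (w : List (Fin n)) : ℕ := (w.map Fin.val).sum

/-- `f` acts as `core` after the prefix `α` and fixes every sequence not beginning
with `α`. -/
def IsPrefixMap {n : ℕ} (α : List (Fin n)) (core : Γ n) (f : Γ n) : Prop :=
  (∀ η, f (wcons α η) = wcons α (core η)) ∧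
  (∀ ξ : C n, (∀ η, ξ ≠ wcons α η) → f ξ = ξ)

/-- The defining equations of the generator `x₀` of the Brown–Thompson group `F(n)`. -/
def IsX0 (n : ℕ) (hn : 2 ≤ n) (f : Γ n) : Prop :=
  (∀ k : Fin n, (k : ℕ) ≤ n - 2 → ∀ η,
    f (cons ⟨0, by omega⟩ (cons k η)) = cons k η) ∧
  (∀ η, f (cons ⟨0, by omega⟩ (cons ⟨n - 1, by omega⟩ η)) =
    cons ⟨n - 1, by omega⟩ (cons ⟨0, by omega⟩ η)) ∧
  (∀ k : Fin n, 1 ≤ (k : ℕ) → (k : ℕ) ≤ n - 2 → ∀ η,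
    f (cons k η) = cons ⟨n - 1, by omega⟩ (cons k η)) ∧
  (∀ η, f (cons ⟨n - 1, by omega⟩ η) =
    cons ⟨n - 1, by omega⟩ (cons ⟨n - 1, by omega⟩ η))

/-- The defining equations of the generator `x_j`, `1 ≤ j ≤ n - 2`. -/
def IsXMid (n : ℕ) (hn : 2 ≤ n) (j : Fin n) (f : Γ n) : Prop :=
  (∀ k : Fin n, (k : ℕ) < (j : ℕ) → ∀ η, f (cons k η) = cons k η) ∧
  (∀ k m : Fin n, (m : ℕ) = (j : ℕ) + (k : ℕ) → (j : ℕ) + (k : ℕ) ≤ n - 2 → ∀ η,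
    f (cons j (cons k η)) = cons m η) ∧
  (∀ k m : Fin n, n - 1 ≤ (j : ℕ) + (k : ℕ) → (m : ℕ) = (j : ℕ) + (k : ℕ) - (n - 1) → ∀ η,
    f (cons j (cons k η)) = cons ⟨n - 1, by omega⟩ (cons m η)) ∧
  (∀ k : Fin n, (j : ℕ) < (k : ℕ) → (k : ℕ) ≤ n - 2 → ∀ η,
    f (cons k η) = cons ⟨n - 1, by omega⟩ (cons k η)) ∧
  (∀ η, f (cons ⟨n - 1, by omega⟩ η) =
    cons ⟨n - 1, by omega⟩ (cons ⟨n - 1, by omega⟩ η))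

/-- The defining equations of the generator `x_{n-1}` (in terms of `x₀`). -/
def IsXLast (n : ℕ) (hn : 2 ≤ n) (x0 f : Γ n) : Prop :=
  (∀ k : Fin n, (k : ℕ) ≤ n - 2 → ∀ η, f (cons k η) = cons k η) ∧
  (∀ η, f (cons ⟨n - 1, by omega⟩ η) = cons ⟨n - 1, by omega⟩ (x0 η))

/-- `x` is the family `x₀, …, x_{n-1}` of generators of the Brown–Thompson group. -/
def IsXFamily (n : ℕ) (hn : 2 ≤ n) (x : Fin n → Γ n) : Prop :=
  IsX0 n hn (x ⟨0, by omega⟩) ∧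
  (∀ j : Fin n, 1 ≤ (j : ℕ) → (j : ℕ) ≤ n - 2 → IsXMid n hn j (x j)) ∧
  IsXLast n hn (x ⟨0, by omega⟩) (x ⟨n - 1, by omega⟩)

/-- The defining (co)recursive equations of the map `y`. -/
def IsY (n : ℕ) (hn : 2 ≤ n) (f : Γ n) : Prop :=
  (∀ ζ, f (cons ⟨0, by omega⟩ (cons ⟨0, by omega⟩ ζ)) = cons ⟨0, by omega⟩ (f ζ)) ∧
  (∀ k : Fin n, 1 ≤ (k : ℕ) → (k : ℕ) ≤ n - 2 → ∀ ζ,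
    f (cons ⟨0, by omega⟩ (cons k ζ)) = cons k ζ) ∧
  (∀ k : Fin n, 1 ≤ (k : ℕ) → (k : ℕ) ≤ n - 2 → ∀ ζ,
    f (cons k ζ) = cons ⟨n - 1, by omega⟩ (cons k ζ)) ∧
  (∀ ζ, f (cons ⟨0, by omega⟩ (cons ⟨n - 1, by omega⟩ ζ)) =
    cons ⟨n - 1, by omega⟩ (cons ⟨0, by omega⟩ (f⁻¹ ζ))) ∧
  (∀ ζ, f (cons ⟨n - 1, by omega⟩ ζ) =
    cons ⟨n - 1, by omega⟩ (cons ⟨n - 1, by omega⟩ (f ζ)))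


/-! ### Auxiliary infrastructure -/

section Aux

variable {n : ℕ}

lemma inv_app_eq {f : Γ n} {a b : C n} : f⁻¹ a = b ↔ a = f b :=
  f.toEquiv.symm_apply_eq

lemma apply_inv_apply (f : Γ n) (a : C n) : f (f⁻¹ a) = a :=
  f.apply_symm_apply a

lemma inv_apply_apply (f : Γ n) (a : C n) : f⁻¹ (f a) = a :=
  f.symm_apply_apply a

lemma eta (ξ : C n) : ξ = cons (ξ 0) (fun i => ξ (i + 1)) := by
  funext i; cases i <;> rfl

lemma exists_cons (ξ : C n) : ∃ a σ, ξ = cons a σ :=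
  ⟨ξ 0, fun i => ξ (i + 1), eta ξ⟩

lemma ne_head {a b : Fin n} (h : a ≠ b) (s t : C n) : cons a s ≠ cons b t :=
  fun e => h (congrFun e 0)

lemma ne_second {a b c d : Fin n} (h : b ≠ d) (s t : C n) :
    cons a (cons b s) ≠ cons c (cons d t) :=
  fun e => h (congrFun e 1)

lemma ne_third {a b c d e' f' : Fin n} (h : c ≠ f') (s t : C n) :
    cons a (cons b (cons c s)) ≠ cons d (cons e' (cons f' t)) :=
  fun e => h (congrFun e 2)

lemma pm_inv {α : List (Fin n)} {core f : Γ n} (h : IsPrefixMap α core f) :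
    IsPrefixMap α core⁻¹ f⁻¹ := by
  refine ⟨fun η => ?_, fun ξ hξ => ?_⟩
  · rw [inv_app_eq, h.1, apply_inv_apply]
  · rw [inv_app_eq]; exact (h.2 ξ hξ).symm

lemma pm_conj {α β : List (Fin n)} {core c g : Γ n} (hg : IsPrefixMap β core g)
    (hc : ∀ η, c (wcons α η) = wcons β η) :
    IsPrefixMap α core (c⁻¹ * g * c) := by
  refine ⟨fun η => ?_, fun ξ hξ => ?_⟩
  · show c⁻¹ (g (c (wcons α η))) = _
    rw [hc, hg.1, inv_app_eq, hc]
  · show c⁻¹ (g (c ξ)) = ξ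
    have h2 : ∀ η, c ξ ≠ wcons β η := fun η e =>
      hξ η (c.injective (by rw [hc]; exact e))
    rw [hg.2 _ h2, inv_apply_apply]

lemma pm_unique {α : List (Fin n)} {core f g : Γ n}
    (hf : IsPrefixMap α core f) (hg : IsPrefixMap α core g) : f = g := by
  apply Homeomorph.ext; intro ξ
  by_cases h : ∃ η, ξ = wcons α η
  · obtain ⟨η, rfl⟩ := h; rw [hf.1, hg.1]
  · push_neg at h; rw [hf.2 ξ h, hg.2 ξ h]

/-- The all-`z` word of length `a` prepended to a sequence. -/
def zs (z : Fin n) : ℕ → C n → C n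
  | 0, ζ => ζ
  | a + 1, ζ => cons z (zs z a ζ)

lemma zs_add (z : Fin n) (a b : ℕ) (ζ : C n) :
    zs z (a + b) ζ = zs z a (zs z b ζ) := by
  induction a with
  | zero => rw [Nat.zero_add]; rfl
  | succ a ih =>
      rw [show a + 1 + b = (a + b) + 1 from by omega]
      show cons z (zs z (a + b) ζ) = cons z (zs z a (zs z b ζ))
      rw [ih]

lemma zs_shift (z : Fin n) (m : ℕ) (ρ : C n) :
    cons z (zs z m ρ) = zs z m (cons z ρ) := by
  induction m with
  | zero => rfl
  | succ m ih =>
      show cons z (cons z (zs z m ρ)) = cons z (zs z m (cons z ρ))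
      rw [ih]

lemma zs_app_lt (z : Fin n) {m i : ℕ} (h : i < m) (ζ : C n) : zs z m ζ i = z := by
  induction m generalizing i with
  | zero => omega
  | succ m ih =>
      cases i with
      | zero => rfl
      | succ i => exact ih (by omega) 

lemma zs_app_ge (z : Fin n) {m i : ℕ} (h : m ≤ i) (ζ : C n) :
    zs z m ζ i = ζ (i - m) := by
  induction m generalizing i with
  | zero => rfl
  | succ m ih =>
      cases i with
      | zero => omega
      | succ i =>
          show zs z m ζ i = ζ (i + 1 - (m + 1))
          rw [Nat.succ_sub_succ]
          exact ih (by omega)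

/-- The subgroup of homeomorphisms acting as a shift on all-`z` prefixes. -/
def Sgp (z : Fin n) : Subgroup (Γ n) where
  carrier := {g | ∃ a b, ∀ ζ, g (zs z a ζ) = zs z b ζ}
  one_mem' := ⟨0, 0, fun _ => rfl⟩
  mul_mem' := by
    rintro g h ⟨p, q, hpq⟩ ⟨r, s, hrs⟩
    refine ⟨r + p, q + s, fun ζ => ?_⟩
    show g (h (zs z (r + p) ζ)) = _
    rw [zs_add, hrs, ← zs_add, Nat.add_comm s p, zs_add, hpq, ← zs_add]
  inv_mem' := by
    rintro g ⟨p, q, hpq⟩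
    refine ⟨q, p, fun ζ => ?_⟩
    rw [inv_app_eq]; exact (hpq ζ).symm

end Aux


/-- The letter `0`. -/
abbrev F0 (n : ℕ) (hn : 2 ≤ n) : Fin n := ⟨0, by omega⟩

/-- The letter `n - 1`. -/
abbrev FN (n : ℕ) (hn : 2 ≤ n) : Fin n := ⟨n - 1, by omega⟩

theorem conjugate_mem_and_not_mem
    (n : ℕ) (hn : 2 ≤ n) (x : Fin n → Γ n) (hx : IsXFamily n hn x)
    (ycore : Γ n) (hy : IsY n hn ycore)
    (y10 : Γ n) (hy10 : IsPrefixMap [⟨n - 1, by omega⟩, ⟨0, by omega⟩] ycore y10)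
    (y0 : Γ n) (hy0 : IsPrefixMap [⟨0, by omega⟩] ycore y0)
    (y1 : Γ n) (hy1 : IsPrefixMap [⟨n - 1, by omega⟩] ycore y1)
    (X00 : Γ n) (hX00 : IsPrefixMap [⟨0, by omega⟩] (x ⟨0, by omega⟩) X00)
    (G0 : Subgroup (Γ n)) (hG0 : G0 = Subgroup.closure (Set.range x ∪ {y10}))
    (Gy : Subgroup (Γ n)) (hGy : Gy = Subgroup.closure (Set.range x ∪ {y10, y1})) :
    y0⁻¹ * x ⟨0, by omega⟩ * y0 ∈ G0 ∧ y0 * X00 * y0⁻¹ ∉ Gy := by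
  have hvo : ((F0 n hn : Fin n) : ℕ) = 0 := rfl
  have hvN : ((FN n hn : Fin n) : ℕ) = n - 1 := rfl
  have hoN : F0 n hn ≠ FN n hn := Fin.ne_of_val_ne (by rw [hvo, hvN]; omega)
  have hNo : FN n hn ≠ F0 n hn := hoN.symm
  have hle0 : ((F0 n hn : Fin n) : ℕ) ≤ n - 2 := by rw [hvo]; exact Nat.zero_le _
  -- the defining equations restated in `cons` form
  have s1 : ∀ (k : Fin n), (k : ℕ) ≤ n - 2 → ∀ η,
      x (F0 n hn) (cons (F0 n hn) (cons k η)) = cons k η := hx.1.1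
  have s0 : ∀ η, x (F0 n hn) (cons (F0 n hn) (cons (F0 n hn) η)) = cons (F0 n hn) η :=
    fun η => s1 _ hle0 η
  have s2 : ∀ η, x (F0 n hn) (cons (F0 n hn) (cons (FN n hn) η)) =
      cons (FN n hn) (cons (F0 n hn) η) := hx.1.2.1
  have s3 : ∀ (k : Fin n), 1 ≤ (k : ℕ) → (k : ℕ) ≤ n - 2 → ∀ η,
      x (F0 n hn) (cons k η) = cons (FN n hn) (cons k η) := hx.1.2.2.1
  have s4 : ∀ η, x (F0 n hn) (cons (FN n hn) η) =
      cons (FN n hn) (cons (FN n hn) η) := hx.1.2.2.2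
  have t1 : ∀ (k : Fin n), (k : ℕ) ≤ n - 2 → ∀ η,
      x (FN n hn) (cons k η) = cons k η := hx.2.2.1
  have t0 : ∀ η, x (FN n hn) (cons (F0 n hn) η) = cons (F0 n hn) η :=
    fun η => t1 _ hle0 η
  have t2 : ∀ η, x (FN n hn) (cons (FN n hn) η) =
      cons (FN n hn) (x (F0 n hn) η) := hx.2.2.2
  have y1e : ∀ ζ, ycore (cons (F0 n hn) (cons (F0 n hn) ζ)) = cons (F0 n hn) (ycore ζ) := hy.1
  have y2e : ∀ (k : Fin n), 1 ≤ (k : ℕ) → (k : ℕ) ≤ n - 2 → ∀ ζ,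
      ycore (cons (F0 n hn) (cons k ζ)) = cons k ζ := hy.2.1
  have y3e : ∀ (k : Fin n), 1 ≤ (k : ℕ) → (k : ℕ) ≤ n - 2 → ∀ ζ,
      ycore (cons k ζ) = cons (FN n hn) (cons k ζ) := hy.2.2.1
  have y4e : ∀ ζ, ycore (cons (F0 n hn) (cons (FN n hn) ζ)) =
      cons (FN n hn) (cons (F0 n hn) (ycore⁻¹ ζ)) := hy.2.2.2.1
  have y5e : ∀ ζ, ycore (cons (FN n hn) ζ) =
      cons (FN n hn) (cons (FN n hn) (ycore ζ)) := hy.2.2.2.2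
  have p1 : ∀ η, y0 (cons (F0 n hn) η) = cons (F0 n hn) (ycore η) := hy0.1
  have hy0i := pm_inv hy0
  have q1 : ∀ η, y0⁻¹ (cons (F0 n hn) η) = cons (F0 n hn) (ycore⁻¹ η) := hy0i.1
  have q2 : ∀ ξ, (∀ η, ξ ≠ cons (F0 n hn) η) → y0⁻¹ ξ = ξ := hy0i.2
  have p2 : ∀ ξ, (∀ η, ξ ≠ cons (F0 n hn) η) → y0 ξ = ξ := hy0.2
  have v1 : ∀ η, X00 (cons (F0 n hn) η) = cons (F0 n hn) (x (F0 n hn) η) := hX00.1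
  have v2 : ∀ ξ, (∀ η, ξ ≠ cons (F0 n hn) η) → X00 ξ = ξ := hX00.2
  have hy10' : IsPrefixMap [FN n hn, F0 n hn] ycore y10 := hy10
  have hy1' : IsPrefixMap [FN n hn] ycore y1 := hy1
  have hX00' : IsPrefixMap [F0 n hn] (x (F0 n hn)) X00 := hX00
  -- the word expressing `X00` in the Brown–Thompson generators
  have hW : IsPrefixMap [F0 n hn] (x (F0 n hn))
      ((x (F0 n hn))⁻¹ * (x (FN n hn))⁻¹ * x (F0 n hn) * x (F0 n hn)) := by
    constructor
    · intro η
      show (x (F0 n hn))⁻¹ ((x (FN n hn))⁻¹ (x (F0 n hn) (x (F0 n hn)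
        (cons (F0 n hn) η)))) = cons (F0 n hn) (x (F0 n hn) η)
      rw [inv_app_eq, inv_app_eq]
      obtain ⟨a, σ, rfl⟩ := exists_cons η
      by_cases ha0 : (a : ℕ) = 0
      · obtain rfl : a = F0 n hn := Fin.ext ha0
        obtain ⟨b, τ, rfl⟩ := exists_cons σ
        by_cases hb0 : (b : ℕ) = 0
        · obtain rfl : b = F0 n hn := Fin.ext hb0
          rw [s0, s0, s0, t0]
        · by_cases hbN : (b : ℕ) = n - 1
          · obtain rfl : b = FN n hn := Fin.ext hbN
            rw [s0, s2, s2, t2, s0]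
          · have hk1 : 1 ≤ (b : ℕ) := by omega
            have hk2 : (b : ℕ) ≤ n - 2 := by have := b.isLt; omega
            rw [s0, s1 b hk2, s1 b hk2, t1 b hk2]
      · by_cases haN : (a : ℕ) = n - 1
        · obtain rfl : a = FN n hn := Fin.ext haN
          rw [s2, s4, s4, s2, t2, s2]
        · have hk1 : 1 ≤ (a : ℕ) := by omega
          have hk2 : (a : ℕ) ≤ n - 2 := by have := a.isLt; omega
          rw [s1 a hk2, s3 a hk1 hk2, s2, t2, s1 a hk2]
    · intro ξ hξ
      obtain ⟨a, σ, rfl⟩ := exists_cons ξ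
      have ha0 : (a : ℕ) ≠ 0 := fun h =>
        hξ σ (by rw [show a = F0 n hn from Fin.ext h]; rfl)
      show (x (F0 n hn))⁻¹ ((x (FN n hn))⁻¹ (x (F0 n hn) (x (F0 n hn)
        (cons a σ)))) = cons a σ
      rw [inv_app_eq, inv_app_eq]
      by_cases haN : (a : ℕ) = n - 1
      · obtain rfl : a = FN n hn := Fin.ext haN
        rw [s4, s4, t2, s4]
      · have hk1 : 1 ≤ (a : ℕ) := by omega
        have hk2 : (a : ℕ) ≤ n - 2 := by have := a.isLt; omega
        rw [s3 a hk1 hk2, s4, t2, s3 a hk1 hk2]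
  have hWX : X00 = (x (F0 n hn))⁻¹ * (x (FN n hn))⁻¹ * x (F0 n hn) * x (F0 n hn) :=
    pm_unique hX00' hW
  -- the `y`-type prefix maps on the cylinders 0(n-1)0 and 0(n-1)(n-1)
  set B1 : Γ n := (x (FN n hn))⁻¹ * y10 * x (FN n hn) with hB1def
  set B2 : Γ n := ((x (F0 n hn))⁻¹ * x (FN n hn))⁻¹ * y10 * ((x (F0 n hn))⁻¹ * x (FN n hn))
    with hB2def
  set E1 : Γ n := (x (F0 n hn))⁻¹ * B1 * x (F0 n hn) with hE1def
  set E2 : Γ n := (x (F0 n hn))⁻¹ * B2 * x (F0 n hn) with hE2def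
  have hB1 : IsPrefixMap [FN n hn, F0 n hn, F0 n hn] ycore B1 := by
    rw [hB1def]
    exact pm_conj hy10' (fun η => by
      show x (FN n hn) (cons (FN n hn) (cons (F0 n hn) (cons (F0 n hn) η))) =
        cons (FN n hn) (cons (F0 n hn) η)
      rw [t2, s0])
  have hB2 : IsPrefixMap [FN n hn, F0 n hn, FN n hn] ycore B2 := by
    rw [hB2def]
    exact pm_conj hy10' (fun η => by
      show (x (F0 n hn))⁻¹ (x (FN n hn) (cons (FN n hn) (cons (F0 n hn)
        (cons (FN n hn) η)))) = cons (FN n hn) (cons (F0 n hn) η)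
      rw [t2, s2, inv_app_eq, s4])
  have hE1 : IsPrefixMap [F0 n hn, FN n hn, F0 n hn] ycore E1 := by
    rw [hE1def]
    exact pm_conj hB1 (fun η => by
      show x (F0 n hn) (cons (F0 n hn) (cons (FN n hn) (cons (F0 n hn) η))) =
        cons (FN n hn) (cons (F0 n hn) (cons (F0 n hn) η))
      rw [s2])
  have hE2 : IsPrefixMap [F0 n hn, FN n hn, FN n hn] ycore E2 := by
    rw [hE2def]
    exact pm_conj hB2 (fun η => by
      show x (F0 n hn) (cons (F0 n hn) (cons (FN n hn) (cons (FN n hn) η))) =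
        cons (FN n hn) (cons (F0 n hn) (cons (FN n hn) η))
      rw [s2])
  have hE1i := pm_inv hE1
  have r1 : ∀ η, E1⁻¹ (cons (F0 n hn) (cons (FN n hn) (cons (F0 n hn) η))) =
      cons (F0 n hn) (cons (FN n hn) (cons (F0 n hn) (ycore⁻¹ η))) := hE1i.1
  have r2 : ∀ ξ, (∀ η, ξ ≠ cons (F0 n hn) (cons (FN n hn) (cons (F0 n hn) η))) →
      E1⁻¹ ξ = ξ := hE1i.2
  have u1 : ∀ η, E2 (cons (F0 n hn) (cons (FN n hn) (cons (FN n hn) η))) =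
      cons (F0 n hn) (cons (FN n hn) (cons (FN n hn) (ycore η))) := hE2.1
  have u2 : ∀ ξ, (∀ η, ξ ≠ cons (F0 n hn) (cons (FN n hn) (cons (FN n hn) η))) →
      E2 ξ = ξ := hE2.2
  -- the key identity
  have key1 : y0⁻¹ * x (F0 n hn) * y0 = x (F0 n hn) * E2 * E1⁻¹ * X00 := by
    apply Homeomorph.ext; intro ξ
    show y0⁻¹ (x (F0 n hn) (y0 ξ)) = x (F0 n hn) (E2 (E1⁻¹ (X00 ξ)))
    obtain ⟨a, σ, rfl⟩ := exists_cons ξ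
    by_cases ha0 : (a : ℕ) = 0
    · obtain rfl : a = F0 n hn := Fin.ext ha0
      obtain ⟨b, τ, rfl⟩ := exists_cons σ
      by_cases hb0 : (b : ℕ) = 0
      · obtain rfl : b = F0 n hn := Fin.ext hb0
        obtain ⟨c, ζ, rfl⟩ := exists_cons τ
        by_cases hc0 : (c : ℕ) = 0
        · obtain rfl : c = F0 n hn := Fin.ext hc0
          rw [p1, y1e, s0, q1, inv_apply_apply, v1, s0,
            r2 (cons (F0 n hn) (cons (F0 n hn) ζ)) (fun η => ne_second hoN _ _),
            u2 (cons (F0 n hn) (cons (F0 n hn) ζ)) (fun η => ne_second hoN _ _), s0]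
        · by_cases hcN : (c : ℕ) = n - 1
          · obtain rfl : c = FN n hn := Fin.ext hcN
            rw [p1, y4e, s2, q2 _ (fun η => ne_head hNo _ _), v1, s2, r1,
              u2 _ (fun η => ne_third hoN _ _), s2]
          · have hk1 : 1 ≤ (c : ℕ) := by omega
            have hk2 : (c : ℕ) ≤ n - 2 := by have := c.isLt; omega
            have hko : c ≠ F0 n hn := Fin.ne_of_val_ne (by rw [hvo]; omega)
            have hkN : c ≠ FN n hn := Fin.ne_of_val_ne (by rw [hvN]; omega)
            rw [p1, y2e c hk1 hk2, s1 c hk2, q2 _ (fun η => ne_head hko _ _), v1,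
              s1 c hk2, r2 _ (fun η => ne_second hkN _ _),
              u2 _ (fun η => ne_second hkN _ _), s1 c hk2]
      · by_cases hbN : (b : ℕ) = n - 1
        · obtain rfl : b = FN n hn := Fin.ext hbN
          rw [p1, y5e, s2, q2 _ (fun η => ne_head hNo _ _), v1, s4,
            r2 _ (fun η => ne_third hNo _ _), u1, s2]
        · have hk1 : 1 ≤ (b : ℕ) := by omega
          have hk2 : (b : ℕ) ≤ n - 2 := by have := b.isLt; omega
          have hko : b ≠ F0 n hn := Fin.ne_of_val_ne (by rw [hvo]; omega)
          have hkN : b ≠ FN n hn := Fin.ne_of_val_ne (by rw [hvN]; omega)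
          rw [p1, y3e b hk1 hk2, s2, q2 _ (fun η => ne_head hNo _ _), v1,
            s3 b hk1 hk2, r2 _ (fun η => ne_third hko _ _),
            u2 _ (fun η => ne_third hkN _ _), s2]
    · by_cases haN : (a : ℕ) = n - 1
      · obtain rfl : a = FN n hn := Fin.ext haN
        rw [p2 _ (fun η => ne_head hNo _ _), s4, q2 _ (fun η => ne_head hNo _ _),
          v2 _ (fun η => ne_head hNo _ _), r2 _ (fun η => ne_head hNo _ _),
          u2 _ (fun η => ne_head hNo _ _), s4]
      · have hk1 : 1 ≤ (a : ℕ) := by omega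
        have hk2 : (a : ℕ) ≤ n - 2 := by have := a.isLt; omega
        have hko : a ≠ F0 n hn := Fin.ne_of_val_ne (by rw [hvo]; omega)
        rw [p2 _ (fun η => ne_head hko _ _), s3 a hk1 hk2,
          q2 _ (fun η => ne_head hNo _ _), v2 _ (fun η => ne_head hko _ _),
          r2 _ (fun η => ne_head hko _ _), u2 _ (fun η => ne_head hko _ _),
          s3 a hk1 hk2]
  refine ⟨?_, ?_⟩
  · -- membership in G0
    show y0⁻¹ * x (F0 n hn) * y0 ∈ G0
    rw [key1, hG0]
    have m0 : x (F0 n hn) ∈ Subgroup.closure (Set.range x ∪ {y10}) :=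
      Subgroup.subset_closure (Set.mem_union_left _ ⟨F0 n hn, rfl⟩)
    have mN : x (FN n hn) ∈ Subgroup.closure (Set.range x ∪ {y10}) :=
      Subgroup.subset_closure (Set.mem_union_left _ ⟨FN n hn, rfl⟩)
    have m10 : y10 ∈ Subgroup.closure (Set.range x ∪ {y10}) :=
      Subgroup.subset_closure (Set.mem_union_right _ rfl)
    have hE1m : E1 ∈ Subgroup.closure (Set.range x ∪ {y10}) := by
      rw [hE1def, hB1def]
      exact mul_mem (mul_mem (inv_mem m0) (mul_mem (mul_mem (inv_mem mN) m10) mN)) m0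
    have hE2m : E2 ∈ Subgroup.closure (Set.range x ∪ {y10}) := by
      rw [hE2def, hB2def]
      exact mul_mem (mul_mem (inv_mem m0)
        (mul_mem (mul_mem (inv_mem (mul_mem (inv_mem m0) mN)) m10)
          (mul_mem (inv_mem m0) mN))) m0
    have hX00m : X00 ∈ Subgroup.closure (Set.range x ∪ {y10}) := by
      rw [hWX]
      exact mul_mem (mul_mem (mul_mem (inv_mem m0) (inv_mem mN)) m0) m0
    exact mul_mem (mul_mem (mul_mem m0 hE2m) (inv_mem hE1m)) hX00m
  · -- non-membership in Gy
    intro hw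
    rw [hGy] at hw
    have hsub : (Set.range x ∪ {y10, y1}) ⊆ ↑(Sgp (F0 n hn)) := by
      rintro g (⟨j, rfl⟩ | hg)
      · by_cases hj0 : (j : ℕ) = 0
        · obtain rfl : j = F0 n hn := Fin.ext hj0
          exact ⟨2, 1, fun ζ => s0 (zs (F0 n hn) 0 ζ)⟩
        · by_cases hjN : (j : ℕ) = n - 1
          · obtain rfl : j = FN n hn := Fin.ext hjN
            exact ⟨1, 1, fun ζ => t0 (zs (F0 n hn) 0 ζ)⟩
          · have hj1 : 1 ≤ (j : ℕ) := by omega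
            have hj2 : (j : ℕ) ≤ n - 2 := by have := j.isLt; omega
            exact ⟨1, 1, fun ζ => (hx.2.1 j hj1 hj2).1 (F0 n hn)
              (by rw [hvo]; omega) (zs (F0 n hn) 0 ζ)⟩
      · simp only [Set.mem_insert_iff, Set.mem_singleton_iff] at hg
        rcases hg with rfl | rfl
        · exact ⟨1, 1, fun ζ => hy10'.2 _ (fun η => ne_head hoN _ _)⟩
        · exact ⟨1, 1, fun ζ => hy1'.2 _ (fun η => ne_head hoN _ _)⟩
    have hwS : (y0 * X00 * y0⁻¹) ∈ Sgp (F0 n hn) :=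
      (Subgroup.closure_le _).mpr hsub hw
    obtain ⟨A, B, hAB⟩ : ∃ a b, ∀ ζ, (y0 * X00 * y0⁻¹) (zs (F0 n hn) a ζ) =
      zs (F0 n hn) b ζ := hwS
    have hAB2 : ∀ ζ, (y0 * X00 * y0⁻¹) (zs (F0 n hn) (A + 2) ζ) =
        zs (F0 n hn) (B + 2) ζ := fun ζ => by
      rw [zs_add (F0 n hn) A 2 ζ, hAB (zs (F0 n hn) 2 ζ), ← zs_add (F0 n hn) B 2 ζ]
    have k1 : ∀ ω, ycore⁻¹ (cons (F0 n hn) ω) =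
        cons (F0 n hn) (cons (F0 n hn) (ycore⁻¹ ω)) := fun ω => by
      rw [inv_app_eq, y1e, apply_inv_apply]
    have k2 : ∀ (a : ℕ) ω, ycore⁻¹ (zs (F0 n hn) a ω) =
        zs (F0 n hn) (2 * a) (ycore⁻¹ ω) := by
      intro a
      induction a with
      | zero => intro ω; rfl
      | succ a ih =>
          intro ω
          show ycore⁻¹ (cons (F0 n hn) (zs (F0 n hn) a ω)) = _
          rw [k1, ih, show 2 * (a + 1) = 2 * a + 1 + 1 from by omega]
          rfl
    have k3 : ∀ (m : ℕ) ω, ycore (zs (F0 n hn) (2 * m) ω) =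
        zs (F0 n hn) m (ycore ω) := by
      intro m
      induction m with
      | zero => intro ω; rfl
      | succ m ih =>
          intro ω
          rw [show 2 * (m + 1) = 2 * m + 1 + 1 from by omega]
          show ycore (cons (F0 n hn) (cons (F0 n hn) (zs (F0 n hn) (2 * m) ω))) = _
          rw [y1e, ih]
          rfl
    have kw : ∀ (a : ℕ) ζ, (y0 * X00 * y0⁻¹) (zs (F0 n hn) (a + 2) ζ) =
        zs (F0 n hn) (a + 1) (ycore (cons (F0 n hn) (ycore⁻¹ ζ))) := by
      intro a ζ
      show y0 (X00 (y0⁻¹ (cons (F0 n hn) (zs (F0 n hn) (a + 1) ζ)))) = _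
      rw [q1, k2, show 2 * (a + 1) = 2 * a + 1 + 1 from by omega, v1,
        show zs (F0 n hn) (2 * a + 1 + 1) (ycore⁻¹ ζ) =
          cons (F0 n hn) (cons (F0 n hn) (zs (F0 n hn) (2 * a) (ycore⁻¹ ζ))) from rfl,
        s0, p1, zs_shift, k3]
      rfl
    have EQ := (kw A (ycore (cons (FN n hn) (fun _ => F0 n hn)))).symm.trans
      (hAB2 (ycore (cons (FN n hn) (fun _ => F0 n hn))))
    rw [inv_apply_apply, y4e, y5e] at EQ
    rcases Nat.lt_trichotomy (A + 1) (B + 2) with hlt | heq | hgt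
    · have hco := congrFun EQ (A + 1)
      rw [zs_app_ge (F0 n hn) (le_refl (A + 1)), Nat.sub_self,
        zs_app_lt (F0 n hn) hlt] at hco
      exact hNo hco
    · have hco := congrFun EQ (A + 2)
      rw [zs_app_ge (F0 n hn) (show A + 1 ≤ A + 2 from by omega),
        show A + 2 - (A + 1) = 1 from by omega,
        zs_app_ge (F0 n hn) (show B + 2 ≤ A + 2 from by omega),
        show A + 2 - (B + 2) = 1 from by omega] at hco
      exact hoN hco
    · have hco := congrFun EQ (B + 2)
      rw [zs_app_lt (F0 n hn) (show B + 2 < A + 1 from by omega),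
        zs_app_ge (F0 n hn) (le_refl (B + 2)), Nat.sub_self] at hco
      exact hoN hco


end LM
end

section
/- (a) Gy(n) is generated by G_0(n) together with y_{n−1}; (b) the conjugate subgroup y_{n−1}^{−1} G_0(n) y_{n−1} is a proper subgroup of G_0(n); and (c) the natural homomorphism from the HNN extension ⟨G_0(n), t | t^{−1} h t = y_{n−1}^{−1} h y_{n−1} (h ∈ G_0(n))⟩ to Gy(n), restricting to the identity on G_0(n) and sending the stable letter t to y_{n−1}, is an isomorphism. In other words, Gy(n) has a strictly ascending HNN decomposition Gy(n) ≅ (G_0(n)) *_{y_{n−1}}. -/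
namespace LM

/-! ### Auxiliary infrastructure -/

section Aux

variable {n : ℕ}

lemma mul_app (f g : Γ n) (ξ : C n) : (f * g) ξ = f (g ξ) := rfl

lemma inv_app (f : Γ n) (ξ : C n) : f⁻¹ ξ = f.symm ξ := rfl

lemma one_app (ξ : C n) : (1 : Γ n) ξ = ξ := rfl

lemma inv_eval (f : Γ n) {a b : C n} (h : f a = b) : f⁻¹ b = a := by
  rw [inv_app, ← h, Homeomorph.symm_apply_apply]

lemma fix_inv (f : Γ n) {a : C n} (h : f a = a) : f⁻¹ a = a := inv_eval f h

lemma apply_inv (f : Γ n) (ξ : C n) : f (f⁻¹ ξ) = ξ := f.apply_symm_apply ξ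

lemma inv_apply (f : Γ n) (ξ : C n) : f⁻¹ (f ξ) = ξ := f.symm_apply_apply ξ

lemma cons_at_zero (a : Fin n) (s : C n) : cons a s 0 = a := rfl

lemma cons_at_succ (a : Fin n) (s : C n) (i : ℕ) : cons a s (i + 1) = s i := rfl

lemma cases_cons (ξ : C n) : ∃ a s, ξ = cons a s :=
  ⟨ξ 0, fun i => ξ (i + 1), by funext i; cases i <;> rfl⟩

lemma cons_head {a b : Fin n} {s t : C n} (h : cons a s = cons b t) : a = b :=
  congrFun h 0

lemma cons_tail {a b : Fin n} {s t : C n} (h : cons a s = cons b t) : s = t := by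
  funext i; exact congrFun h (i + 1)

/-- letters -/
abbrev lO (hn : 2 ≤ n) : Fin n := ⟨0, by omega⟩
abbrev lZ (hn : 2 ≤ n) : Fin n := ⟨n - 1, by omega⟩

variable (hn : 2 ≤ n)

lemma lO_ne_lZ : lO hn ≠ lZ hn := by
  intro h
  have := congrArg Fin.val h
  simp only [lO, lZ] at this
  omega

lemma ne_lZ_of_le {a : Fin n} (ha : (a : ℕ) ≤ n - 2) : a ≠ lZ hn := by
  intro h; rw [h] at ha; simp only [lZ] at ha; omega

lemma ne_lO_of_ge {a : Fin n} (ha : 1 ≤ (a : ℕ)) : a ≠ lO hn := by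
  intro h; rw [h] at ha; simp only [lO] at ha; omega

lemma wcons_pair (a b : Fin n) (s : C n) : wcons [a, b] s = cons a (cons b s) := rfl

lemma wcons_single (a : Fin n) (s : C n) : wcons [a] s = cons a s := rfl

/-! ### Clause library for `ycore` -/

section YClauses
variable {f : Γ n}

lemma Y00 (hy : IsY n hn f) (ζ : C n) : f (cons (lO hn) (cons (lO hn) ζ)) = cons (lO hn) (f ζ) := hy.1 ζ

lemma Y0k (hy : IsY n hn f) {k : Fin n} (h1 : 1 ≤ (k : ℕ)) (h2 : (k : ℕ) ≤ n - 2) (ζ : C n) :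
    f (cons (lO hn) (cons k ζ)) = cons k ζ := hy.2.1 k h1 h2 ζ

lemma Yk (hy : IsY n hn f) {k : Fin n} (h1 : 1 ≤ (k : ℕ)) (h2 : (k : ℕ) ≤ n - 2) (ζ : C n) :
    f (cons k ζ) = cons (lZ hn) (cons k ζ) := hy.2.2.1 k h1 h2 ζ

lemma Y0Z (hy : IsY n hn f) (ζ : C n) : f (cons (lO hn) (cons (lZ hn) ζ)) =
    cons (lZ hn) (cons (lO hn) (f⁻¹ ζ)) := hy.2.2.2.1 ζ

lemma YZ (hy : IsY n hn f) (ζ : C n) : f (cons (lZ hn) ζ) =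
    cons (lZ hn) (cons (lZ hn) (f ζ)) := hy.2.2.2.2 ζ

lemma Yi0 (hy : IsY n hn f) (ζ : C n) : f⁻¹ (cons (lO hn) ζ) = cons (lO hn) (cons (lO hn) (f⁻¹ ζ)) :=
  inv_eval f (by rw [Y00 hn hy, apply_inv])

lemma Yik (hy : IsY n hn f) {k : Fin n} (h1 : 1 ≤ (k : ℕ)) (h2 : (k : ℕ) ≤ n - 2) (ζ : C n) :
    f⁻¹ (cons k ζ) = cons (lO hn) (cons k ζ) :=
  inv_eval f (Y0k hn hy h1 h2 ζ)

lemma YiZk (hy : IsY n hn f) {k : Fin n} (h1 : 1 ≤ (k : ℕ)) (h2 : (k : ℕ) ≤ n - 2) (ζ : C n) :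
    f⁻¹ (cons (lZ hn) (cons k ζ)) = cons k ζ :=
  inv_eval f (Yk hn hy h1 h2 ζ)

lemma YiZ0 (hy : IsY n hn f) (ζ : C n) : f⁻¹ (cons (lZ hn) (cons (lO hn) ζ)) =
    cons (lO hn) (cons (lZ hn) (f ζ)) :=
  inv_eval f (by rw [Y0Z hn hy, inv_apply])

lemma YiZZ (hy : IsY n hn f) (ζ : C n) : f⁻¹ (cons (lZ hn) (cons (lZ hn) ζ)) = cons (lZ hn) (f⁻¹ ζ) :=
  inv_eval f (by rw [YZ hn hy, apply_inv])

end YClauses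

/-! ### Clause library for `x₀` -/

section X0Clauses
variable {g : Γ n}

lemma X0k (hg : IsX0 n hn g) {k : Fin n} (h2 : (k : ℕ) ≤ n - 2) (η : C n) :
    g (cons (lO hn) (cons k η)) = cons k η := hg.1 k h2 η

lemma X0Z (hg : IsX0 n hn g) (η : C n) : g (cons (lO hn) (cons (lZ hn) η)) =
    cons (lZ hn) (cons (lO hn) η) := hg.2.1 η

lemma Xk (hg : IsX0 n hn g) {k : Fin n} (h1 : 1 ≤ (k : ℕ)) (h2 : (k : ℕ) ≤ n - 2) (η : C n) :
    g (cons k η) = cons (lZ hn) (cons k η) := hg.2.2.1 k h1 h2 η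

lemma XZ (hg : IsX0 n hn g) (η : C n) : g (cons (lZ hn) η) = cons (lZ hn) (cons (lZ hn) η) := hg.2.2.2 η

lemma X0ik (hg : IsX0 n hn g) {k : Fin n} (h2 : (k : ℕ) ≤ n - 2) (η : C n) :
    g⁻¹ (cons k η) = cons (lO hn) (cons k η) := inv_eval g (X0k hn hg h2 η)

lemma X0iZ0 (hg : IsX0 n hn g) (η : C n) : g⁻¹ (cons (lZ hn) (cons (lO hn) η)) =
    cons (lO hn) (cons (lZ hn) η) := inv_eval g (X0Z hn hg η)

lemma X0iZk (hg : IsX0 n hn g) {k : Fin n} (h1 : 1 ≤ (k : ℕ)) (h2 : (k : ℕ) ≤ n - 2) (η : C n) :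
    g⁻¹ (cons (lZ hn) (cons k η)) = cons k η := inv_eval g (Xk hn hg h1 h2 η)

lemma X0iZZ (hg : IsX0 n hn g) (η : C n) : g⁻¹ (cons (lZ hn) (cons (lZ hn) η)) = cons (lZ hn) η :=
  inv_eval g (XZ hn hg η)

end X0Clauses

/-! ### Clause library for `x_{n-1}` -/

section XLClauses
variable {g h : Γ n}

lemma XLk (hh : IsXLast n hn g h) {k : Fin n} (h2 : (k : ℕ) ≤ n - 2) (η : C n) :
    h (cons k η) = cons k η := hh.1 k h2 η

lemma XLZ (hh : IsXLast n hn g h) (η : C n) : h (cons (lZ hn) η) = cons (lZ hn) (g η) := hh.2 η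

lemma XLik (hh : IsXLast n hn g h) {k : Fin n} (h2 : (k : ℕ) ≤ n - 2) (η : C n) :
    h⁻¹ (cons k η) = cons k η := inv_eval h (XLk hn hh h2 η)

lemma XLiZ (hh : IsXLast n hn g h) (η : C n) : h⁻¹ (cons (lZ hn) η) = cons (lZ hn) (g⁻¹ η) :=
  inv_eval h (by rw [XLZ hn hh, apply_inv])

end XLClauses

/-! ### Clause library for prefix maps on the cones `[Z,O]` and `[Z]` -/

section PrefClauses
variable {f u : Γ n}

lemma PA_app (hu : IsPrefixMap [lZ hn, lO hn] f u) (μ : C n) :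
    u (cons (lZ hn) (cons (lO hn) μ)) = cons (lZ hn) (cons (lO hn) (f μ)) := hu.1 μ

lemma PA_fix1 (hu : IsPrefixMap [lZ hn, lO hn] f u) {a : Fin n} (ha : a ≠ lZ hn) (s : C n) :
    u (cons a s) = cons a s := by
  refine hu.2 _ fun η hη => ha (cons_head hη)

lemma PA_fix2 (hu : IsPrefixMap [lZ hn, lO hn] f u) {b : Fin n} (hb : b ≠ lO hn) (s : C n) :
    u (cons (lZ hn) (cons b s)) = cons (lZ hn) (cons b s) := by
  refine hu.2 _ fun η hη => hb (cons_head (cons_tail hη))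

lemma PAi_app (hu : IsPrefixMap [lZ hn, lO hn] f u) (μ : C n) :
    u⁻¹ (cons (lZ hn) (cons (lO hn) μ)) = cons (lZ hn) (cons (lO hn) (f⁻¹ μ)) :=
  inv_eval u (by rw [PA_app hn hu, apply_inv])

lemma PAi_fix1 (hu : IsPrefixMap [lZ hn, lO hn] f u) {a : Fin n} (ha : a ≠ lZ hn) (s : C n) :
    u⁻¹ (cons a s) = cons a s := fix_inv u (PA_fix1 hn hu ha s)

lemma PAi_fix2 (hu : IsPrefixMap [lZ hn, lO hn] f u) {b : Fin n} (hb : b ≠ lO hn) (s : C n) :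
    u⁻¹ (cons (lZ hn) (cons b s)) = cons (lZ hn) (cons b s) := fix_inv u (PA_fix2 hn hu hb s)

lemma PZ_app (hu : IsPrefixMap [lZ hn] f u) (ζ : C n) :
    u (cons (lZ hn) ζ) = cons (lZ hn) (f ζ) := hu.1 ζ

lemma PZ_fix (hu : IsPrefixMap [lZ hn] f u) {a : Fin n} (ha : a ≠ lZ hn) (s : C n) :
    u (cons a s) = cons a s := by
  refine hu.2 _ fun η hη => ha (cons_head hη)

lemma PZi_app (hu : IsPrefixMap [lZ hn] f u) (ζ : C n) :
    u⁻¹ (cons (lZ hn) ζ) = cons (lZ hn) (f⁻¹ ζ) :=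
  inv_eval u (by rw [PZ_app hn hu, apply_inv])

lemma PZi_fix (hu : IsPrefixMap [lZ hn] f u) {a : Fin n} (ha : a ≠ lZ hn) (s : C n) :
    u⁻¹ (cons a s) = cons a s := fix_inv u (PZ_fix hn hu ha s)

end PrefClauses

end Aux

/-! ### The words `B = x₀ A x₀⁻¹`, `B'' = x₀² A x₀⁻²`, `X = x₀ x_{n-1} x₀⁻¹` -/

section Words

variable {n : ℕ} (hn : 2 ≤ n) {g0 gN A f : Γ n}

lemma lO_val : ((lO hn : Fin n) : ℕ) = 0 := rfl
lemma lZ_val : ((lZ hn : Fin n) : ℕ) = n - 1 := rfl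

lemma val_le_of_ne_lZ {a : Fin n} (ha : a ≠ lZ hn) : (a : ℕ) ≤ n - 2 := by
  have h1 : (a : ℕ) < n := a.isLt
  have h2 : (a : ℕ) ≠ n - 1 := fun h => ha (Fin.ext (by rw [h, lZ_val]))
  omega

lemma mid_or_lO {b : Fin n} (hb : b ≠ lZ hn) :
    b = lO hn ∨ (1 ≤ (b : ℕ) ∧ (b : ℕ) ≤ n - 2) := by
  have h2 := val_le_of_ne_lZ hn hb
  rcases Nat.eq_zero_or_pos (b : ℕ) with h | h
  · exact Or.inl (Fin.ext (by rw [h, lO_val]))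
  · exact Or.inr ⟨h, h2⟩

lemma B_app (hg : IsX0 n hn g0) (hA : IsPrefixMap [lZ hn, lO hn] f A) (μ : C n) :
    (g0 * A * g0⁻¹) (cons (lZ hn) (cons (lZ hn) (cons (lO hn) μ))) =
      cons (lZ hn) (cons (lZ hn) (cons (lO hn) (f μ))) := by
  rw [mul_app, mul_app, X0iZZ hn hg, PA_app hn hA, XZ hn hg]

lemma B_fix1 (hg : IsX0 n hn g0) (hA : IsPrefixMap [lZ hn, lO hn] f A)
    {a : Fin n} (ha : a ≠ lZ hn) (s : C n) :
    (g0 * A * g0⁻¹) (cons a s) = cons a s := by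
  rw [mul_app, mul_app, X0ik hn hg (val_le_of_ne_lZ hn ha),
    PA_fix1 hn hA (lO_ne_lZ hn), X0k hn hg (val_le_of_ne_lZ hn ha)]

lemma B_fix2 (hg : IsX0 n hn g0) (hA : IsPrefixMap [lZ hn, lO hn] f A)
    {b : Fin n} (hb : b ≠ lZ hn) (s : C n) :
    (g0 * A * g0⁻¹) (cons (lZ hn) (cons b s)) = cons (lZ hn) (cons b s) := by
  rw [mul_app, mul_app]
  rcases mid_or_lO hn hb with rfl | ⟨h1, h2⟩
  · rw [X0iZ0 hn hg, PA_fix1 hn hA (lO_ne_lZ hn), X0Z hn hg]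
  · rw [X0iZk hn hg h1 h2, PA_fix1 hn hA hb, Xk hn hg h1 h2]

lemma B_fix3 (hg : IsX0 n hn g0) (hA : IsPrefixMap [lZ hn, lO hn] f A)
    {c : Fin n} (hc : c ≠ lO hn) (s : C n) :
    (g0 * A * g0⁻¹) (cons (lZ hn) (cons (lZ hn) (cons c s))) =
      cons (lZ hn) (cons (lZ hn) (cons c s)) := by
  rw [mul_app, mul_app, X0iZZ hn hg, PA_fix2 hn hA hc, XZ hn hg]

lemma Bi_fix {ξ : C n} (h : (g0 * A * g0⁻¹) ξ = ξ) : (g0 * A * g0⁻¹)⁻¹ ξ = ξ :=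
  fix_inv _ h

lemma Bi_app (hg : IsX0 n hn g0) (hA : IsPrefixMap [lZ hn, lO hn] f A) (μ : C n) :
    (g0 * A * g0⁻¹)⁻¹ (cons (lZ hn) (cons (lZ hn) (cons (lO hn) μ))) =
      cons (lZ hn) (cons (lZ hn) (cons (lO hn) (f⁻¹ μ))) :=
  inv_eval _ (by rw [B_app hn hg hA, apply_inv])

lemma Bpp_app (hg : IsX0 n hn g0) (hA : IsPrefixMap [lZ hn, lO hn] f A) (μ : C n) :
    (g0 * g0 * A * g0⁻¹ * g0⁻¹)
        (cons (lZ hn) (cons (lZ hn) (cons (lZ hn) (cons (lO hn) μ)))) =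
      cons (lZ hn) (cons (lZ hn) (cons (lZ hn) (cons (lO hn) (f μ)))) := by
  rw [mul_app, mul_app, mul_app, mul_app, X0iZZ hn hg, X0iZZ hn hg,
    PA_app hn hA, XZ hn hg, XZ hn hg]

lemma Bpp_fix1 (hg : IsX0 n hn g0) (hA : IsPrefixMap [lZ hn, lO hn] f A)
    {a : Fin n} (ha : a ≠ lZ hn) (s : C n) :
    (g0 * g0 * A * g0⁻¹ * g0⁻¹) (cons a s) = cons a s := by
  have h0 : ((lO hn : Fin n) : ℕ) ≤ n - 2 := by rw [lO_val]; omega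
  rw [mul_app, mul_app, mul_app, mul_app, X0ik hn hg (val_le_of_ne_lZ hn ha),
    X0ik hn hg h0, PA_fix1 hn hA (lO_ne_lZ hn), X0k hn hg h0,
    X0k hn hg (val_le_of_ne_lZ hn ha)]

lemma Bpp_fix2 (hg : IsX0 n hn g0) (hA : IsPrefixMap [lZ hn, lO hn] f A)
    {b : Fin n} (hb : b ≠ lZ hn) (s : C n) :
    (g0 * g0 * A * g0⁻¹ * g0⁻¹) (cons (lZ hn) (cons b s)) =
      cons (lZ hn) (cons b s) := by
  have h0 : ((lO hn : Fin n) : ℕ) ≤ n - 2 := by rw [lO_val]; omega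
  rw [mul_app, mul_app, mul_app, mul_app]
  rcases mid_or_lO hn hb with rfl | ⟨h1, h2⟩
  · rw [X0iZ0 hn hg, X0ik hn hg h0, PA_fix1 hn hA (lO_ne_lZ hn), X0k hn hg h0,
      X0Z hn hg]
  · rw [X0iZk hn hg h1 h2, X0ik hn hg h2, PA_fix1 hn hA (lO_ne_lZ hn),
      X0k hn hg h2, Xk hn hg h1 h2]

lemma Bpp_fix3 (hg : IsX0 n hn g0) (hA : IsPrefixMap [lZ hn, lO hn] f A)
    {c : Fin n} (hc : c ≠ lZ hn) (s : C n) :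
    (g0 * g0 * A * g0⁻¹ * g0⁻¹) (cons (lZ hn) (cons (lZ hn) (cons c s))) =
      cons (lZ hn) (cons (lZ hn) (cons c s)) := by
  rw [mul_app, mul_app, mul_app, mul_app, X0iZZ hn hg]
  rcases mid_or_lO hn hc with rfl | ⟨h1, h2⟩
  · rw [X0iZ0 hn hg, PA_fix1 hn hA (lO_ne_lZ hn), X0Z hn hg, XZ hn hg]
  · rw [X0iZk hn hg h1 h2, PA_fix1 hn hA hc, Xk hn hg h1 h2, XZ hn hg]

lemma Bpp_fix4 (hg : IsX0 n hn g0) (hA : IsPrefixMap [lZ hn, lO hn] f A)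
    {d : Fin n} (hd : d ≠ lO hn) (s : C n) :
    (g0 * g0 * A * g0⁻¹ * g0⁻¹)
        (cons (lZ hn) (cons (lZ hn) (cons (lZ hn) (cons d s)))) =
      cons (lZ hn) (cons (lZ hn) (cons (lZ hn) (cons d s))) := by
  rw [mul_app, mul_app, mul_app, mul_app, X0iZZ hn hg, X0iZZ hn hg,
    PA_fix2 hn hA hd, XZ hn hg, XZ hn hg]

lemma Bppi_app (hg : IsX0 n hn g0) (hA : IsPrefixMap [lZ hn, lO hn] f A) (μ : C n) :
    (g0 * g0 * A * g0⁻¹ * g0⁻¹)⁻¹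
        (cons (lZ hn) (cons (lZ hn) (cons (lZ hn) (cons (lO hn) μ)))) =
      cons (lZ hn) (cons (lZ hn) (cons (lZ hn) (cons (lO hn) (f⁻¹ μ)))) :=
  inv_eval _ (by rw [Bpp_app hn hg hA, apply_inv])

lemma Xw_app (hg : IsX0 n hn g0) (hh : IsXLast n hn g0 gN) (κ : C n) :
    (g0 * gN * g0⁻¹) (cons (lZ hn) (cons (lZ hn) κ)) =
      cons (lZ hn) (cons (lZ hn) (g0 κ)) := by
  rw [mul_app, mul_app, X0iZZ hn hg, XLZ hn hh, XZ hn hg]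

lemma Xw_fix1 (hg : IsX0 n hn g0) (hh : IsXLast n hn g0 gN)
    {a : Fin n} (ha : a ≠ lZ hn) (s : C n) :
    (g0 * gN * g0⁻¹) (cons a s) = cons a s := by
  have h0 : ((lO hn : Fin n) : ℕ) ≤ n - 2 := by rw [lO_val]; omega
  rw [mul_app, mul_app, X0ik hn hg (val_le_of_ne_lZ hn ha), XLk hn hh h0,
    X0k hn hg (val_le_of_ne_lZ hn ha)]

lemma Xw_fix2 (hg : IsX0 n hn g0) (hh : IsXLast n hn g0 gN)
    {b : Fin n} (hb : b ≠ lZ hn) (s : C n) :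
    (g0 * gN * g0⁻¹) (cons (lZ hn) (cons b s)) = cons (lZ hn) (cons b s) := by
  rw [mul_app, mul_app]
  rcases mid_or_lO hn hb with rfl | ⟨h1, h2⟩
  · rw [X0iZ0 hn hg, XLk hn hh (by rw [lO_val]; omega), X0Z hn hg]
  · rw [X0iZk hn hg h1 h2, XLk hn hh h2, Xk hn hg h1 h2]

end Words

/-! ### The key conjugation relations -/

section Rels

variable {n : ℕ} (hn : 2 ≤ n) {g0 gN xj A y1c ycore : Γ n}

lemma ZneO : (lZ hn : Fin n) ≠ lO hn := (lO_ne_lZ hn).symm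

/-- `y₁ x₀ = A B⁻¹ x_{n-1} x₀ y₁` -/
lemma rel_x0 (hg : IsX0 n hn g0) (hh : IsXLast n hn g0 gN)
    (hy : IsY n hn ycore) (hA : IsPrefixMap [lZ hn, lO hn] ycore A)
    (hy1 : IsPrefixMap [lZ hn] ycore y1c) :
    y1c * g0 = A * (g0 * A * g0⁻¹)⁻¹ * gN * g0 * y1c := by
  refine Homeomorph.ext fun ξ => ?_
  obtain ⟨a, s, rfl⟩ := cases_cons ξ
  simp only [mul_app]
  by_cases haZ : a = lZ hn
  · subst haZ
    rw [XZ hn hg, PZ_app hn hy1, YZ hn hy, PZ_app hn hy1, XZ hn hg, XLZ hn hh,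
      XZ hn hg, Bi_fix (B_fix3 hn hg hA (ZneO hn) _), PA_fix2 hn hA (ZneO hn)]
  · rw [PZ_fix hn hy1 haZ]
    rcases mid_or_lO hn haZ with rfl | ⟨ha1, ha2⟩
    · -- a = O
      obtain ⟨b, μ, rfl⟩ := cases_cons s
      by_cases hbZ : b = lZ hn
      · subst hbZ
        rw [X0Z hn hg, XLZ hn hh]
        obtain ⟨c, ρ, rfl⟩ := cases_cons μ
        by_cases hcZ : c = lZ hn
        · subst hcZ
          rw [PZ_app hn hy1, Y0Z hn hy, X0Z hn hg,
            Bi_app hn hg hA, PA_fix2 hn hA (ZneO hn)]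
        · rcases mid_or_lO hn hcZ with rfl | ⟨hc1, hc2⟩
          · rw [PZ_app hn hy1, Y00 hn hy, X0k hn hg (by rw [lO_val]; omega),
              Bi_fix (B_fix2 hn hg hA (lO_ne_lZ hn) _), PA_app hn hA]
          · rw [PZ_app hn hy1, Y0k hn hy hc1 hc2, X0k hn hg hc2,
              Bi_fix (B_fix2 hn hg hA hcZ _), PA_fix2 hn hA (ne_lO_of_ge hn hc1)]
      · rcases mid_or_lO hn hbZ with rfl | ⟨hb1, hb2⟩
        · rw [X0k hn hg (by rw [lO_val]; omega), PZ_fix hn hy1 (lO_ne_lZ hn),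
            XLk hn hh (by rw [lO_val]; omega),
            Bi_fix (B_fix1 hn hg hA (lO_ne_lZ hn) _), PA_fix1 hn hA (lO_ne_lZ hn)]
        · rw [X0k hn hg hb2, PZ_fix hn hy1 hbZ, XLk hn hh hb2,
            Bi_fix (B_fix1 hn hg hA hbZ _), PA_fix1 hn hA hbZ]
    · -- a mid
      rw [Xk hn hg ha1 ha2, PZ_app hn hy1, Yk hn hy ha1 ha2,
        XLZ hn hh, Xk hn hg ha1 ha2, Bi_fix (B_fix3 hn hg hA (ne_lO_of_ge hn ha1) _),
        PA_fix2 hn hA (ZneO hn)]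

/-- `y₁ (x_{n-1}⁻¹ A x_{n-1}) = A y₁` -/
lemma rel_alpha (hg : IsX0 n hn g0) (hh : IsXLast n hn g0 gN)
    (hy : IsY n hn ycore) (hA : IsPrefixMap [lZ hn, lO hn] ycore A)
    (hy1 : IsPrefixMap [lZ hn] ycore y1c) :
    y1c * (gN⁻¹ * A * gN) = A * y1c := by
  refine Homeomorph.ext fun ξ => ?_
  obtain ⟨a, s, rfl⟩ := cases_cons ξ
  simp only [mul_app]
  by_cases haZ : a = lZ hn
  · subst haZ
    rw [XLZ hn hh, PZ_app hn hy1]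
    obtain ⟨b, ζ, rfl⟩ := cases_cons s
    by_cases hbZ : b = lZ hn
    · subst hbZ
      rw [XZ hn hg, PA_fix2 hn hA (ZneO hn), XLiZ hn hh, X0iZZ hn hg,
        PZ_app hn hy1, YZ hn hy, PA_fix2 hn hA (ZneO hn)]
    · rcases mid_or_lO hn hbZ with rfl | ⟨hb1, hb2⟩
      · -- b = O : need second letter of ζ
        obtain ⟨c, μ, rfl⟩ := cases_cons ζ
        by_cases hcZ : c = lZ hn
        · subst hcZ
          rw [X0Z hn hg, PA_fix2 hn hA (ZneO hn), XLiZ hn hh, X0iZ0 hn hg,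
            PZ_app hn hy1, Y0Z hn hy, PA_fix2 hn hA (ZneO hn)]
        · rcases mid_or_lO hn hcZ with rfl | ⟨hc1, hc2⟩
          · rw [X0k hn hg (by rw [lO_val]; omega), PA_app hn hA, XLiZ hn hh,
              X0ik hn hg (by rw [lO_val]; omega), PZ_app hn hy1, Y00 hn hy, Y00 hn hy, PA_app hn hA]
          · rw [X0k hn hg hc2, PA_fix2 hn hA (ne_lO_of_ge hn hc1), XLiZ hn hh,
              X0ik hn hg hc2, PZ_app hn hy1, Y0k hn hy hc1 hc2, PA_fix2 hn hA (ne_lO_of_ge hn hc1)]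
      · rw [Xk hn hg hb1 hb2, PA_fix2 hn hA (ZneO hn), XLiZ hn hh,
          X0iZk hn hg hb1 hb2, PZ_app hn hy1, Yk hn hy hb1 hb2, PA_fix2 hn hA (ZneO hn)]
  · have hle := val_le_of_ne_lZ hn haZ
    rw [XLk hn hh hle, PA_fix1 hn hA haZ, XLik hn hh hle, PZ_fix hn hy1 haZ, PA_fix1 hn hA haZ]

end Rels

section RelMid

variable {n : ℕ} (hn : 2 ≤ n) {g0 gN xj A y1c ycore : Γ n} {j : Fin n}

lemma M_lt (hm : IsXMid n hn j xj) {k : Fin n} (h : (k : ℕ) < (j : ℕ)) (η : C n) :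
    xj (cons k η) = cons k η := hm.1 k h η

lemma M_Z (hm : IsXMid n hn j xj) (η : C n) :
    xj (cons (lZ hn) η) = cons (lZ hn) (cons (lZ hn) η) := hm.2.2.2.2 η

/-- `y₁ x_j = A B⁻¹ x_{n-1} x_j y₁` for middle `j` -/
lemma rel_xmid (hj1 : 1 ≤ (j : ℕ)) (hj2 : (j : ℕ) ≤ n - 2)
    (hg : IsX0 n hn g0) (hh : IsXLast n hn g0 gN) (hm : IsXMid n hn j xj)
    (hy : IsY n hn ycore) (hA : IsPrefixMap [lZ hn, lO hn] ycore A)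
    (hy1 : IsPrefixMap [lZ hn] ycore y1c) :
    y1c * xj = A * (g0 * A * g0⁻¹)⁻¹ * gN * xj * y1c := by
  have hjZ : j ≠ lZ hn := ne_lZ_of_le hn hj2
  have hjO : j ≠ lO hn := ne_lO_of_ge hn hj1
  refine Homeomorph.ext fun ξ => ?_
  obtain ⟨a, s, rfl⟩ := cases_cons ξ
  simp only [mul_app]
  by_cases haZ : a = lZ hn
  · subst haZ
    rw [M_Z hn hm, PZ_app hn hy1, YZ hn hy, PZ_app hn hy1, M_Z hn hm,
      XLZ hn hh, XZ hn hg, Bi_fix (B_fix3 hn hg hA (ZneO hn) _),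
      PA_fix2 hn hA (ZneO hn)]
  · have haL := val_le_of_ne_lZ hn haZ
    rw [PZ_fix hn hy1 haZ]
    rcases lt_trichotomy ((a : ℕ)) ((j : ℕ)) with hlt | heq | hgt
    · rw [M_lt hn hm hlt, PZ_fix hn hy1 haZ, XLk hn hh haL,
        Bi_fix (B_fix1 hn hg hA haZ _), PA_fix1 hn hA haZ]
    · have haj : a = j := Fin.ext heq
      subst haj
      obtain ⟨b, μ, rfl⟩ := cases_cons s
      by_cases hge : n - 1 ≤ (a : ℕ) + (b : ℕ)
      · by_cases heqn : (a : ℕ) + (b : ℕ) = n - 1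
        · have hM := hm.2.2.1 b (lO hn) hge (by rw [lO_val]; omega)
          obtain ⟨c, ρ, rfl⟩ := cases_cons μ
          rw [hM, PZ_app hn hy1]
          by_cases hcZ : c = lZ hn
          · subst hcZ
            rw [Y0Z hn hy, XLZ hn hh, X0Z hn hg, Bi_app hn hg hA,
              PA_fix2 hn hA (ZneO hn)]
          · rcases mid_or_lO hn hcZ with rfl | ⟨hc1, hc2⟩
            · rw [Y00 hn hy, XLZ hn hh, X0k hn hg (by rw [lO_val]; omega),
                Bi_fix (B_fix2 hn hg hA (lO_ne_lZ hn) _), PA_app hn hA]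
            · rw [Y0k hn hy hc1 hc2, XLZ hn hh, X0k hn hg hc2,
                Bi_fix (B_fix2 hn hg hA hcZ _), PA_fix2 hn hA (ne_lO_of_ge hn hc1)]
        · set m : Fin n := ⟨(a : ℕ) + (b : ℕ) - (n - 1), by omega⟩ with hmdef
          have hm1 : 1 ≤ (m : ℕ) := by simp [hmdef]; omega
          have hm2 : (m : ℕ) ≤ n - 2 := by simp [hmdef]; omega
          have hM := hm.2.2.1 b m hge (by simp [hmdef])
          rw [hM, PZ_app hn hy1, Yk hn hy hm1 hm2, XLZ hn hh, Xk hn hg hm1 hm2,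
            Bi_fix (B_fix3 hn hg hA (ne_lO_of_ge hn hm1) _),
            PA_fix2 hn hA (ZneO hn)]
      · set m : Fin n := ⟨(a : ℕ) + (b : ℕ), by omega⟩ with hmdef
        have hm2 : (m : ℕ) ≤ n - 2 := by simp [hmdef]; omega
        have hM := hm.2.1 b m (by simp [hmdef]) (by omega)
        have hmZ : m ≠ lZ hn := ne_lZ_of_le hn hm2
        rw [hM, PZ_fix hn hy1 hmZ, XLk hn hh hm2,
          Bi_fix (B_fix1 hn hg hA hmZ _), PA_fix1 hn hA hmZ]
    · have hM := hm.2.2.2.1 a hgt haL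
      rw [hM, PZ_app hn hy1, Yk hn hy (by omega) haL, XLZ hn hh,
        Xk hn hg (by omega) haL, Bi_fix (B_fix3 hn hg hA (ne_lO_of_ge hn (by omega)) _),
        PA_fix2 hn hA (ZneO hn)]

end RelMid

section RelXN

variable {n : ℕ} (hn : 2 ≤ n) {g0 gN A f y1c ycore : Γ n}

lemma B_app' (hg : IsX0 n hn g0) (hA : IsPrefixMap [lZ hn, lO hn] f A) (μ : C n) :
    g0 (A (g0⁻¹ (cons (lZ hn) (cons (lZ hn) (cons (lO hn) μ))))) =
      cons (lZ hn) (cons (lZ hn) (cons (lO hn) (f μ))) := B_app hn hg hA μ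

lemma B_fix1' (hg : IsX0 n hn g0) (hA : IsPrefixMap [lZ hn, lO hn] f A)
    {a : Fin n} (ha : a ≠ lZ hn) (s : C n) :
    g0 (A (g0⁻¹ (cons a s))) = cons a s := B_fix1 hn hg hA ha s

lemma B_fix2' (hg : IsX0 n hn g0) (hA : IsPrefixMap [lZ hn, lO hn] f A)
    {b : Fin n} (hb : b ≠ lZ hn) (s : C n) :
    g0 (A (g0⁻¹ (cons (lZ hn) (cons b s)))) = cons (lZ hn) (cons b s) :=
  B_fix2 hn hg hA hb s

lemma B_fix3' (hg : IsX0 n hn g0) (hA : IsPrefixMap [lZ hn, lO hn] f A)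
    {c : Fin n} (hc : c ≠ lO hn) (s : C n) :
    g0 (A (g0⁻¹ (cons (lZ hn) (cons (lZ hn) (cons c s))))) =
      cons (lZ hn) (cons (lZ hn) (cons c s)) := B_fix3 hn hg hA hc s

lemma Xw_app' (hg : IsX0 n hn g0) (hh : IsXLast n hn g0 gN) (κ : C n) :
    g0 (gN (g0⁻¹ (cons (lZ hn) (cons (lZ hn) κ)))) =
      cons (lZ hn) (cons (lZ hn) (g0 κ)) := Xw_app hn hg hh κ

lemma Xw_fix1' (hg : IsX0 n hn g0) (hh : IsXLast n hn g0 gN)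
    {a : Fin n} (ha : a ≠ lZ hn) (s : C n) :
    g0 (gN (g0⁻¹ (cons a s))) = cons a s := Xw_fix1 hn hg hh ha s

lemma Xw_fix2' (hg : IsX0 n hn g0) (hh : IsXLast n hn g0 gN)
    {b : Fin n} (hb : b ≠ lZ hn) (s : C n) :
    g0 (gN (g0⁻¹ (cons (lZ hn) (cons b s)))) = cons (lZ hn) (cons b s) :=
  Xw_fix2 hn hg hh hb s

/-- `y₁ x_{n-1} = (A B⁻¹ x_{n-1} B B''⁻¹ X B A⁻¹) y₁` -/
lemma rel_xN (hg : IsX0 n hn g0) (hh : IsXLast n hn g0 gN)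
    (hy : IsY n hn ycore) (hA : IsPrefixMap [lZ hn, lO hn] ycore A)
    (hy1 : IsPrefixMap [lZ hn] ycore y1c) :
    y1c * gN =
      A * (g0 * A * g0⁻¹)⁻¹ * gN * (g0 * A * g0⁻¹) * (g0 * g0 * A * g0⁻¹ * g0⁻¹)⁻¹ *
        (g0 * gN * g0⁻¹) * (g0 * A * g0⁻¹) * A⁻¹ * y1c := by
  have hO : ((lO hn : Fin n) : ℕ) ≤ n - 2 := by rw [lO_val]; omega
  refine Homeomorph.ext fun ξ => ?_
  obtain ⟨a, s, rfl⟩ := cases_cons ξ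
  simp only [mul_app]
  by_cases haZ : a = lZ hn
  · subst haZ
    obtain ⟨b, ζ, rfl⟩ := cases_cons s
    by_cases hbZ : b = lZ hn
    · subst hbZ
      rw [XLZ hn hh, XZ hn hg, PZ_app hn hy1, PZ_app hn hy1, YZ hn hy, YZ hn hy,
        PAi_fix2 hn hA (ZneO hn), B_fix3' hn hg hA (ZneO hn),
        Xw_app' hn hg hh, XZ hn hg, fix_inv _ (Bpp_fix4 hn hg hA (ZneO hn) _),
        B_fix3' hn hg hA (ZneO hn), XLZ hn hh, XZ hn hg,
        Bi_fix (B_fix3 hn hg hA (ZneO hn) _), PA_fix2 hn hA (ZneO hn)]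
    · rcases mid_or_lO hn hbZ with rfl | ⟨hb1, hb2⟩
      · -- b = O
        obtain ⟨c, μ, rfl⟩ := cases_cons ζ
        by_cases hcZ : c = lZ hn
        · subst hcZ
          rw [XLZ hn hh, X0Z hn hg, PZ_app hn hy1, PZ_app hn hy1, YZ hn hy,
            Y0Z hn hy, PAi_fix2 hn hA (ZneO hn), B_app' hn hg hA, apply_inv,
            Xw_app' hn hg hh]
          obtain ⟨d, ρ, rfl⟩ := cases_cons μ
          by_cases hdZ : d = lZ hn
          · subst hdZ
            rw [Y0Z hn hy, X0Z hn hg, Bppi_app hn hg hA,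
              B_fix3' hn hg hA (ZneO hn), XLZ hn hh, XZ hn hg,
              Bi_fix (B_fix3 hn hg hA (ZneO hn) _), PA_fix2 hn hA (ZneO hn)]
          · rcases mid_or_lO hn hdZ with rfl | ⟨hd1, hd2⟩
            · rw [Y00 hn hy, X0k hn hg hO,
                fix_inv _ (Bpp_fix3 hn hg hA (lO_ne_lZ hn) _), B_app' hn hg hA,
                XLZ hn hh, XZ hn hg, Bi_fix (B_fix3 hn hg hA (ZneO hn) _),
                PA_fix2 hn hA (ZneO hn)]
            · rw [Y0k hn hy hd1 hd2, X0k hn hg hd2,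
                fix_inv _ (Bpp_fix3 hn hg hA hdZ _),
                B_fix3' hn hg hA (ne_lO_of_ge hn hd1), XLZ hn hh, XZ hn hg,
                Bi_fix (B_fix3 hn hg hA (ZneO hn) _), PA_fix2 hn hA (ZneO hn)]
        · rcases mid_or_lO hn hcZ with rfl | ⟨hc1, hc2⟩
          · -- c = O
            rw [XLZ hn hh, X0k hn hg hO, PZ_app hn hy1, PZ_app hn hy1,
              Y00 hn hy, PAi_app hn hA, inv_apply ycore μ, B_fix2' hn hg hA (lO_ne_lZ hn),
              Xw_fix2' hn hg hh (lO_ne_lZ hn),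
              fix_inv _ (Bpp_fix2 hn hg hA (lO_ne_lZ hn) _),
              B_fix2' hn hg hA (lO_ne_lZ hn), XLZ hn hh]
            obtain ⟨d, ρ, rfl⟩ := cases_cons μ
            by_cases hdZ : d = lZ hn
            · subst hdZ
              rw [Y0Z hn hy, X0Z hn hg, Bi_app hn hg hA, PA_fix2 hn hA (ZneO hn)]
            · rcases mid_or_lO hn hdZ with rfl | ⟨hd1, hd2⟩
              · rw [Y00 hn hy, X0k hn hg hO,
                  Bi_fix (B_fix2 hn hg hA (lO_ne_lZ hn) _), PA_app hn hA]
              · rw [Y0k hn hy hd1 hd2, X0k hn hg hd2,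
                  Bi_fix (B_fix2 hn hg hA hdZ _), PA_fix2 hn hA (ne_lO_of_ge hn hd1)]
          · -- c mid
            rw [XLZ hn hh, X0k hn hg hc2, PZ_app hn hy1, PZ_app hn hy1,
              Yk hn hy hc1 hc2, Y0k hn hy hc1 hc2,
              PAi_fix2 hn hA (ne_lO_of_ge hn hc1), B_fix2' hn hg hA hcZ,
              Xw_fix2' hn hg hh hcZ, fix_inv _ (Bpp_fix2 hn hg hA hcZ _),
              B_fix2' hn hg hA hcZ, XLZ hn hh, Xk hn hg hc1 hc2,
              Bi_fix (B_fix3 hn hg hA (ne_lO_of_ge hn hc1) _),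
              PA_fix2 hn hA (ZneO hn)]
      · -- b mid
        rw [XLZ hn hh, Xk hn hg hb1 hb2, PZ_app hn hy1, PZ_app hn hy1, YZ hn hy,
          Yk hn hy hb1 hb2, PAi_fix2 hn hA (ZneO hn),
          B_fix3' hn hg hA (ne_lO_of_ge hn hb1), Xw_app' hn hg hh,
          Xk hn hg hb1 hb2, fix_inv _ (Bpp_fix4 hn hg hA (ne_lO_of_ge hn hb1) _),
          B_fix3' hn hg hA (ZneO hn), XLZ hn hh, XZ hn hg,
          Bi_fix (B_fix3 hn hg hA (ZneO hn) _), PA_fix2 hn hA (ZneO hn)]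
  · have haL := val_le_of_ne_lZ hn haZ
    rw [XLk hn hh haL, PZ_fix hn hy1 haZ, PAi_fix1 hn hA haZ,
      B_fix1' hn hg hA haZ, Xw_fix1' hn hg hh haZ,
      fix_inv _ (Bpp_fix1 hn hg hA haZ _), B_fix1' hn hg hA haZ, XLk hn hh haL,
      Bi_fix (B_fix1 hn hg hA haZ _), PA_fix1 hn hA haZ]

end RelXN

/-! ### The germ invariant subgroup `S` -/

section SInv

variable {n : ℕ} (hn : 2 ≤ n)

/-- `Npow k η = (n-1)^k η`. -/
def Npow (hn : 2 ≤ n) (k : ℕ) (η : C n) : C n := (cons (lZ hn))^[k] η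

lemma Npow_zero (η : C n) : Npow hn 0 η = η := rfl

lemma Npow_succ (k : ℕ) (η : C n) :
    Npow hn (k + 1) η = cons (lZ hn) (Npow hn k η) :=
  Function.iterate_succ_apply' _ k η

lemma Npow_add (a b : ℕ) (η : C n) :
    Npow hn (a + b) η = Npow hn a (Npow hn b η) :=
  Function.iterate_add_apply _ a b η

lemma Npow_app_lt {i a : ℕ} (h : i < a) (s : C n) : Npow hn a s i = lZ hn := by
  induction a generalizing i with
  | zero => omega
  | succ a ih =>
    rw [Npow_succ]
    cases i with
    | zero => rfl
    | succ j => rw [cons_at_succ]; exact ih (by omega)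

lemma Npow_app_add (a i : ℕ) (s : C n) : Npow hn a s (a + i) = s i := by
  induction a with
  | zero => rw [Nat.zero_add]; rfl
  | succ a ih =>
    rw [Npow_succ]
    have : a + 1 + i = (a + i) + 1 := by omega
    rw [this, cons_at_succ]; exact ih

/-- The subgroup of homeomorphisms that eventually shift the point `(n-1)^∞`. -/
def Sinv (hn : 2 ≤ n) : Subgroup (Γ n) where
  carrier := {g | ∃ k0 k1, ∀ η, g (Npow hn k0 η) = Npow hn k1 η}
  one_mem' := ⟨0, 0, fun _ => rfl⟩
  mul_mem' := by
    rintro g h ⟨a0, a1, ha⟩ ⟨b0, b1, hb⟩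
    refine ⟨b0 + a0, a1 + b1, fun η => ?_⟩
    have h1 : h (Npow hn (b0 + a0) η) = Npow hn (b1 + a0) η := by
      rw [Npow_add, ← Npow_add]
      have : b0 + a0 = b0 + a0 := rfl
      calc h (Npow hn (b0 + a0) η) = h (Npow hn b0 (Npow hn a0 η)) := by
            rw [← Npow_add]
        _ = Npow hn b1 (Npow hn a0 η) := hb _
        _ = Npow hn (b1 + a0) η := (Npow_add hn b1 a0 η).symm
    rw [mul_app, h1]
    calc g (Npow hn (b1 + a0) η)
        = g (Npow hn a0 (Npow hn b1 η)) := by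
          rw [← Npow_add, Nat.add_comm b1 a0]
      _ = Npow hn a1 (Npow hn b1 η) := ha _
      _ = Npow hn (a1 + b1) η := (Npow_add hn a1 b1 η).symm
  inv_mem' := by
    rintro g ⟨a0, a1, ha⟩
    exact ⟨a1, a0, fun η => inv_eval g (ha η)⟩

lemma mem_Sinv {g : Γ n} :
    g ∈ Sinv hn ↔ ∃ k0 k1, ∀ η, g (Npow hn k0 η) = Npow hn k1 η := Iff.rfl

variable {g0 gN xj A y1c ycore : Γ n} {j : Fin n}

lemma x0_mem_Sinv (hg : IsX0 n hn g0) : g0 ∈ Sinv hn := by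
  refine ⟨1, 2, fun η => ?_⟩
  rw [show Npow hn 1 η = cons (lZ hn) η from rfl, XZ hn hg]
  rw [Npow_succ, Npow_succ, Npow_zero]

lemma xmid_mem_Sinv (hm : IsXMid n hn j xj) : xj ∈ Sinv hn := by
  refine ⟨1, 2, fun η => ?_⟩
  rw [show Npow hn 1 η = cons (lZ hn) η from rfl, M_Z hn hm]
  rw [Npow_succ, Npow_succ, Npow_zero]

lemma xN_mem_Sinv (hg : IsX0 n hn g0) (hh : IsXLast n hn g0 gN) : gN ∈ Sinv hn := by
  refine ⟨2, 3, fun η => ?_⟩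
  simp only [Npow_succ, Npow_zero, show (2:ℕ) = 1 + 1 from rfl,
    show (3:ℕ) = 1 + 1 + 1 from rfl]
  rw [XLZ hn hh, XZ hn hg]

lemma A_mem_Sinv (hA : IsPrefixMap [lZ hn, lO hn] ycore A) : A ∈ Sinv hn := by
  refine ⟨2, 2, fun η => ?_⟩
  simp only [Npow_succ, Npow_zero, show (2:ℕ) = 1 + 1 from rfl]
  rw [PA_fix2 hn hA (ZneO hn)]

/-! ### Evaluation at the point `(n-1)^k 0^∞` -/

/-- The point `0^∞`. -/
def zp (hn : 2 ≤ n) : C n := fun _ => lO hn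

lemma zp_eq : zp hn = cons (lO hn) (zp hn) := by
  funext i; cases i <;> rfl

lemma Y_zp (hy : IsY n hn ycore) : ycore (zp hn) = zp hn := by
  have h : ycore (zp hn) = cons (lO hn) (ycore (zp hn)) := by
    conv_lhs => rw [zp_eq, zp_eq]
    rw [← Y00 hn hy, ← zp_eq]
  funext i
  induction i with
  | zero => rw [h]; rfl
  | succ i ih => rw [h, cons_at_succ]; exact ih

lemma Y_Npow_zp (hy : IsY n hn ycore) (m : ℕ) :
    ycore (Npow hn m (zp hn)) = Npow hn (2 * m) (zp hn) := by
  induction m with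
  | zero => exact Y_zp hn hy
  | succ m ih =>
    rw [Npow_succ, YZ hn hy, ih, show 2 * (m + 1) = 2 * m + 1 + 1 by omega,
      Npow_succ, Npow_succ]

lemma y1_Npow_zp (hy : IsY n hn ycore) (hy1 : IsPrefixMap [lZ hn] ycore y1c) (m : ℕ) :
    y1c (Npow hn (m + 1) (zp hn)) = Npow hn (2 * m + 1) (zp hn) := by
  rw [Npow_succ, PZ_app hn hy1, Y_Npow_zp hn hy, ← Npow_succ]

lemma y1_zp (hy1 : IsPrefixMap [lZ hn] ycore y1c) : y1c (zp hn) = zp hn := by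
  have h := PZ_fix hn hy1 (lO_ne_lZ hn) (zp hn)
  rw [← zp_eq] at h
  exact h

lemma y1_pow_Npow_zp (hy : IsY n hn ycore) (hy1 : IsPrefixMap [lZ hn] ycore y1c)
    (c m : ℕ) :
    (y1c ^ c) (Npow hn (m + 1) (zp hn)) = Npow hn (2 ^ c * m + 1) (zp hn) := by
  induction c generalizing m with
  | zero => rw [pow_zero, one_app, pow_zero, one_mul]
  | succ c ih =>
    rw [pow_succ, mul_app, y1_Npow_zp hn hy hy1,
      show 2 * m + 1 = (2 * m) + 1 from rfl, ih,
      show 2 ^ (c + 1) * m = 2 ^ c * (2 * m) by ring]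

lemma Npow_zp_inj {a b : ℕ} (h : Npow hn a (zp hn) = Npow hn b (zp hn)) : a = b := by
  by_contra hab
  rcases Nat.lt_or_ge a b with hlt | hge
  · have := congrFun h (a + 0)
    rw [Npow_app_add, Npow_app_lt hn (show a + 0 < b by omega)] at this
    exact lO_ne_lZ hn this
  · have := congrFun h (b + 0)
    rw [Npow_app_lt hn (show b + 0 < a by omega), Npow_app_add] at this
    exact (lO_ne_lZ hn) this.symm

lemma y1_pow_notMem_Sinv (hy : IsY n hn ycore) (hy1 : IsPrefixMap [lZ hn] ycore y1c)
    {c : ℕ} (hc : 1 ≤ c) : y1c ^ c ∉ Sinv hn := by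
  rintro ⟨k0, k1, hk⟩
  have h1 := hk (Npow hn 1 (zp hn))
  have h2 := hk (Npow hn 2 (zp hn))
  rw [← Npow_add, ← Npow_add] at h1 h2
  rw [show k0 + 1 = k0 + 1 from rfl, y1_pow_Npow_zp hn hy hy1] at h1
  rw [show k0 + 2 = (k0 + 1) + 1 by omega, y1_pow_Npow_zp hn hy hy1] at h2
  have e1 := Npow_zp_inj hn h1
  have e2 := Npow_zp_inj hn h2
  have hp : 2 ≤ 2 ^ c := by
    calc 2 = 2 ^ 1 := rfl
    _ ≤ 2 ^ c := Nat.pow_le_pow_right (by omega) hc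
  have e3 : 2 ^ c * (k0 + 1) = 2 ^ c * k0 + 2 ^ c := by ring
  omega

/-- `(n-1)^{2m+1} 0^∞` pulled back under `ycore`. -/
lemma Yi_odd (hy : IsY n hn ycore) (m : ℕ) :
    ycore⁻¹ (Npow hn (2 * m + 1) (zp hn)) =
      Npow hn m (cons (lO hn) (cons (lZ hn) (zp hn))) := by
  induction m with
  | zero =>
    rw [show 2 * 0 + 1 = 1 from rfl, show Npow hn 1 (zp hn) = cons (lZ hn) (zp hn) from rfl]
    conv_lhs => rw [zp_eq]
    rw [YiZ0 hn hy, Y_zp hn hy, Npow_zero]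
  | succ m ih =>
    rw [show 2 * (m + 1) + 1 = (2 * m + 1) + 1 + 1 by omega, Npow_succ, Npow_succ,
      YiZZ hn hy, ih, Npow_succ]

lemma conj_x0_notMem_Sinv (hg : IsX0 n hn g0) (hy : IsY n hn ycore)
    (hy1 : IsPrefixMap [lZ hn] ycore y1c) :
    y1c⁻¹ * g0 * y1c ∉ Sinv hn := by
  rintro ⟨k0, k1, hk⟩
  have h1 := hk (Npow hn 1 (zp hn))
  rw [← Npow_add, ← Npow_add, mul_app, mul_app, y1_Npow_zp hn hy hy1,
    Npow_succ, XZ hn hg, PZi_app hn hy1, ← Npow_succ, Yi_odd hn hy,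
    ← Npow_succ] at h1
  set q : C n := cons (lO hn) (cons (lZ hn) (zp hn)) with hq
  rcases lt_trichotomy (k0 + 1) (k1 + 1) with hlt | heq | hgt
  · have := congrFun h1 (k0 + 1 + 0)
    rw [Npow_app_add, Npow_app_lt hn (show k0 + 1 + 0 < k1 + 1 by omega)] at this
    exact lO_ne_lZ hn this
  · have := congrFun h1 (k0 + 1 + 1)
    rw [Npow_app_add, heq, Npow_app_add] at this
    have hq1 : q 1 = lZ hn := rfl
    have hz1 : zp hn 1 = lO hn := rfl
    rw [hq1, hz1] at this
    exact lO_ne_lZ hn this.symm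
  · have := congrFun h1 (k1 + 1 + 0)
    rw [Npow_app_lt hn (show k1 + 1 + 0 < k0 + 1 by omega), Npow_app_add] at this
    exact lO_ne_lZ hn this.symm

end SInv

/-! ### Conjugation by `y₁` preserves `G₀` -/

section Assemble

variable {n : ℕ} (hn : 2 ≤ n) {x : Fin n → Γ n} {ycore y10 y1 : Γ n}

lemma fin_cases3 (i : Fin n) :
    i = lO hn ∨ (1 ≤ (i : ℕ) ∧ (i : ℕ) ≤ n - 2) ∨ i = lZ hn := by
  have := i.isLt
  by_cases h1 : (i : ℕ) = 0
  · exact Or.inl (Fin.ext h1)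
  · by_cases h2 : (i : ℕ) = n - 1
    · exact Or.inr (Or.inr (Fin.ext h2))
    · exact Or.inr (Or.inl ⟨by omega, by omega⟩)

lemma conj_xN_eq (hg : IsX0 n hn (x (lO hn))) (hh : IsXLast n hn (x (lO hn)) (x (lZ hn)))
    (hy : IsY n hn ycore) (hy10 : IsPrefixMap [lZ hn, lO hn] ycore y10)
    (hy1 : IsPrefixMap [lZ hn] ycore y1) :
    y1 * x (lZ hn) * y1⁻¹ =
      y10 * (x (lO hn) * y10 * (x (lO hn))⁻¹)⁻¹ * x (lZ hn) *
        (x (lO hn) * y10 * (x (lO hn))⁻¹) *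
        (x (lO hn) * x (lO hn) * y10 * (x (lO hn))⁻¹ * (x (lO hn))⁻¹)⁻¹ *
        (x (lO hn) * x (lZ hn) * (x (lO hn))⁻¹) *
        (x (lO hn) * y10 * (x (lO hn))⁻¹) * y10⁻¹ := by
  rw [mul_inv_eq_iff_eq_mul]
  exact rel_xN hn hg hh hy hy10 hy1

lemma conj_mem_G0 (hg : IsX0 n hn (x (lO hn)))
    (hh : IsXLast n hn (x (lO hn)) (x (lZ hn)))
    (hmid : ∀ j : Fin n, 1 ≤ (j : ℕ) → (j : ℕ) ≤ n - 2 → IsXMid n hn j (x j))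
    (hy : IsY n hn ycore) (hy10 : IsPrefixMap [lZ hn, lO hn] ycore y10)
    (hy1 : IsPrefixMap [lZ hn] ycore y1) :
    ∀ g ∈ Subgroup.closure (Set.range x ∪ {y10}),
      y1 * g * y1⁻¹ ∈ Subgroup.closure (Set.range x ∪ {y10}) := by
  have hxmem : ∀ i, x i ∈ Subgroup.closure (Set.range x ∪ {y10}) :=
    fun i => Subgroup.subset_closure (Or.inl ⟨i, rfl⟩)
  have hAmem : y10 ∈ Subgroup.closure (Set.range x ∪ {y10}) :=
    Subgroup.subset_closure (Or.inr rfl)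
  have hBmem : x (lO hn) * y10 * (x (lO hn))⁻¹ ∈
      Subgroup.closure (Set.range x ∪ {y10}) :=
    mul_mem (mul_mem (hxmem _) hAmem) (inv_mem (hxmem _))
  have hBppmem : x (lO hn) * x (lO hn) * y10 * (x (lO hn))⁻¹ * (x (lO hn))⁻¹ ∈
      Subgroup.closure (Set.range x ∪ {y10}) :=
    mul_mem (mul_mem (mul_mem (mul_mem (hxmem _) (hxmem _)) hAmem)
      (inv_mem (hxmem _))) (inv_mem (hxmem _))
  have hXwmem : x (lO hn) * x (lZ hn) * (x (lO hn))⁻¹ ∈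
      Subgroup.closure (Set.range x ∪ {y10}) :=
    mul_mem (mul_mem (hxmem _) (hxmem _)) (inv_mem (hxmem _))
  have hconjN : y1 * x (lZ hn) * y1⁻¹ ∈ Subgroup.closure (Set.range x ∪ {y10}) := by
    rw [conj_xN_eq hn hg hh hy hy10 hy1]
    exact mul_mem (mul_mem (mul_mem (mul_mem (mul_mem (mul_mem
      (mul_mem hAmem (inv_mem hBmem)) (hxmem _)) hBmem) (inv_mem hBppmem))
      hXwmem) hBmem) (inv_mem hAmem)
  have hle : Subgroup.closure (Set.range x ∪ {y10}) ≤
      Subgroup.comap (MulAut.conj y1).toMonoidHom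
        (Subgroup.closure (Set.range x ∪ {y10})) := by
    rw [Subgroup.closure_le]
    rintro g (⟨i, rfl⟩ | hgy)
    · simp only [SetLike.mem_coe, Subgroup.mem_comap, MulEquiv.coe_toMonoidHom,
        MulAut.conj_apply]
      rcases fin_cases3 hn i with rfl | ⟨h1, h2⟩ | rfl
      · have he : y1 * x (lO hn) * y1⁻¹ =
            y10 * (x (lO hn) * y10 * (x (lO hn))⁻¹)⁻¹ * x (lZ hn) * x (lO hn) := by
          rw [mul_inv_eq_iff_eq_mul]
          exact rel_x0 hn hg hh hy hy10 hy1
        rw [he]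
        exact mul_mem (mul_mem (mul_mem hAmem (inv_mem hBmem)) (hxmem _)) (hxmem _)
      · have he : y1 * x i * y1⁻¹ =
            y10 * (x (lO hn) * y10 * (x (lO hn))⁻¹)⁻¹ * x (lZ hn) * x i := by
          rw [mul_inv_eq_iff_eq_mul]
          exact rel_xmid hn h1 h2 hg hh (hmid i h1 h2) hy hy10 hy1
        rw [he]
        exact mul_mem (mul_mem (mul_mem hAmem (inv_mem hBmem)) (hxmem _)) (hxmem _)
      · exact hconjN
    · rw [Set.mem_singleton_iff] at hgy
      simp only [SetLike.mem_coe, Subgroup.mem_comap, MulEquiv.coe_toMonoidHom,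
        MulAut.conj_apply]
      rw [hgy]
      have h := rel_alpha hn hg hh hy hy10 hy1
      have h2 : y1⁻¹ * y10 * y1 = (x (lZ hn))⁻¹ * y10 * x (lZ hn) := by
        calc y1⁻¹ * y10 * y1 = y1⁻¹ * (y10 * y1) := by group
          _ = y1⁻¹ * (y1 * ((x (lZ hn))⁻¹ * y10 * x (lZ hn))) := by rw [← h]
          _ = (x (lZ hn))⁻¹ * y10 * x (lZ hn) := by group
      have hkey : y1 * y10 * y1⁻¹ =
          (y1 * x (lZ hn) * y1⁻¹) * y10 * (y1 * x (lZ hn) * y1⁻¹)⁻¹ := by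
        calc y1 * y10 * y1⁻¹
            = y1 * (x (lZ hn) * ((x (lZ hn))⁻¹ * y10 * x (lZ hn)) *
              (x (lZ hn))⁻¹) * y1⁻¹ := by group
          _ = y1 * (x (lZ hn) * (y1⁻¹ * y10 * y1) * (x (lZ hn))⁻¹) * y1⁻¹ := by
              rw [h2]
          _ = (y1 * x (lZ hn) * y1⁻¹) * y10 * (y1 * x (lZ hn) * y1⁻¹)⁻¹ := by
              group
      rw [hkey]
      exact mul_mem (mul_mem hconjN hAmem) (inv_mem hconjN)
  intro g hg0
  have hm := hle hg0
  rw [Subgroup.mem_comap] at hm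
  simpa only [MulEquiv.coe_toMonoidHom, MulAut.conj_apply] using hm

lemma G0_le_Sinv (hg : IsX0 n hn (x (lO hn)))
    (hh : IsXLast n hn (x (lO hn)) (x (lZ hn)))
    (hmid : ∀ j : Fin n, 1 ≤ (j : ℕ) → (j : ℕ) ≤ n - 2 → IsXMid n hn j (x j))
    (hy10 : IsPrefixMap [lZ hn, lO hn] ycore y10) :
    Subgroup.closure (Set.range x ∪ {y10}) ≤ Sinv hn := by
  rw [Subgroup.closure_le]
  rintro g (⟨i, rfl⟩ | hgy)
  · rcases fin_cases3 hn i with rfl | ⟨h1, h2⟩ | rfl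
    · exact x0_mem_Sinv hn hg
    · exact xmid_mem_Sinv hn (hmid i h1 h2)
    · exact xN_mem_Sinv hn hg hh
  · rw [Set.mem_singleton_iff] at hgy
    subst hgy
    exact A_mem_Sinv hn hy10

end Assemble

/-! ### Normal form in an ascending HNN extension (A = ⊤) -/

section HNNNF

variable {G : Type*} [Group G] {B : Subgroup G} (φ : (⊤ : Subgroup G) ≃* B)

/-- The endomorphism `g ↦ φ(g)` of `G`. -/
def ψmap (φ : (⊤ : Subgroup G) ≃* B) (g : G) : G := ((φ ⟨g, trivial⟩ : B) : G)

lemma hnn_t_mul_of (g : G) :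
    (HNNExtension.t : HNNExtension G ⊤ B φ) * HNNExtension.of g =
      HNNExtension.of (ψmap φ g) * HNNExtension.t :=
  HNNExtension.t_mul_of (⟨g, trivial⟩ : (⊤ : Subgroup G))

lemma hnn_tpow_mul_of (d : ℕ) (g : G) :
    (HNNExtension.t : HNNExtension G ⊤ B φ) ^ d * HNNExtension.of g =
      HNNExtension.of ((ψmap φ)^[d] g) * HNNExtension.t ^ d := by
  induction d generalizing g with
  | zero => simp
  | succ d ih =>
    calc HNNExtension.t ^ (d + 1) * HNNExtension.of g
        = HNNExtension.t ^ d * (HNNExtension.t * HNNExtension.of g) := by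
          rw [pow_succ]; group
      _ = HNNExtension.t ^ d * (HNNExtension.of (ψmap φ g) * HNNExtension.t) := by
          rw [hnn_t_mul_of]
      _ = (HNNExtension.t ^ d * HNNExtension.of (ψmap φ g)) * HNNExtension.t := by
          group
      _ = HNNExtension.of ((ψmap φ)^[d] (ψmap φ g)) * HNNExtension.t ^ d *
            HNNExtension.t := by rw [ih]
      _ = HNNExtension.of ((ψmap φ)^[d + 1] g) * HNNExtension.t ^ (d + 1) := by
          rw [Function.iterate_succ_apply, pow_succ]; group

lemma hnn_of_mul_tpow_inv (d : ℕ) (g : G) :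
    HNNExtension.of g * ((HNNExtension.t : HNNExtension G ⊤ B φ) ^ d)⁻¹ =
      (HNNExtension.t ^ d)⁻¹ * HNNExtension.of ((ψmap φ)^[d] g) := by
  have h := hnn_tpow_mul_of φ d g
  calc HNNExtension.of g * (HNNExtension.t ^ d)⁻¹
      = (HNNExtension.t ^ d)⁻¹ * (HNNExtension.t ^ d * HNNExtension.of g) *
          (HNNExtension.t ^ d)⁻¹ := by group
    _ = (HNNExtension.t ^ d)⁻¹ *
          (HNNExtension.of ((ψmap φ)^[d] g) * HNNExtension.t ^ d) *
          (HNNExtension.t ^ d)⁻¹ := by rw [h]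
    _ = (HNNExtension.t ^ d)⁻¹ * HNNExtension.of ((ψmap φ)^[d] g) := by group

lemma hnn_normal_form (w : HNNExtension G ⊤ B φ) :
    ∃ (m k : ℕ) (g : G),
      w = ((HNNExtension.t : HNNExtension G ⊤ B φ) ^ m)⁻¹ *
        HNNExtension.of g * HNNExtension.t ^ k := by
  refine HNNExtension.induction_on w ?_ ?_ ?_ ?_
  · exact fun g => ⟨0, 0, g, by simp⟩
  · exact ⟨0, 1, 1, by simp⟩
  · rintro a b ⟨m, k, g, rfl⟩ ⟨m', k', g', rfl⟩
    rcases le_or_gt m' k with hle | hlt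
    · obtain ⟨d, rfl⟩ : ∃ d, k = m' + d := ⟨k - m', by omega⟩
      refine ⟨m, d + k', g * (ψmap φ)^[d] g', ?_⟩
      have swap := hnn_tpow_mul_of φ d g'
      calc (HNNExtension.t ^ m)⁻¹ * HNNExtension.of g * HNNExtension.t ^ (m' + d) *
            ((HNNExtension.t ^ m')⁻¹ * HNNExtension.of g' * HNNExtension.t ^ k')
          = (HNNExtension.t ^ m)⁻¹ * HNNExtension.of g *
              (HNNExtension.t ^ d * HNNExtension.of g') * HNNExtension.t ^ k' := by
            rw [pow_add]; group
        _ = (HNNExtension.t ^ m)⁻¹ * HNNExtension.of g *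
              (HNNExtension.of ((ψmap φ)^[d] g') * HNNExtension.t ^ d) *
              HNNExtension.t ^ k' := by rw [swap]
        _ = (HNNExtension.t ^ m)⁻¹ *
              HNNExtension.of (g * (ψmap φ)^[d] g') * HNNExtension.t ^ (d + k') := by
            rw [map_mul, pow_add]; group
    · obtain ⟨d, rfl⟩ : ∃ d, m' = k + d := ⟨m' - k, by omega⟩
      refine ⟨m + d, k', (ψmap φ)^[d] g * g', ?_⟩
      have swap := hnn_of_mul_tpow_inv φ d g
      calc (HNNExtension.t ^ m)⁻¹ * HNNExtension.of g * HNNExtension.t ^ k *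
            ((HNNExtension.t ^ (k + d))⁻¹ * HNNExtension.of g' * HNNExtension.t ^ k')
          = (HNNExtension.t ^ m)⁻¹ *
              (HNNExtension.of g * (HNNExtension.t ^ d)⁻¹) * HNNExtension.of g' *
              HNNExtension.t ^ k' := by rw [pow_add]; group
        _ = (HNNExtension.t ^ m)⁻¹ *
              ((HNNExtension.t ^ d)⁻¹ * HNNExtension.of ((ψmap φ)^[d] g)) *
              HNNExtension.of g' * HNNExtension.t ^ k' := by rw [swap]
        _ = (HNNExtension.t ^ (m + d))⁻¹ *
              HNNExtension.of ((ψmap φ)^[d] g * g') * HNNExtension.t ^ k' := by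
            rw [map_mul, pow_add]; group
  · rintro a ⟨m, k, g, rfl⟩
    refine ⟨k, m, g⁻¹, ?_⟩
    rw [map_inv]; group

end HNNNF

section ConjEquiv

variable {H : Type*} [Group H]

/-- The isomorphism `⊤ ≃* (conjugate subgroup)` given by conjugation. -/
def conjEquiv (G0 : Subgroup H) (y1 : H)
    (hle : G0.map (MulAut.conj y1).toMonoidHom ≤ G0) :
    (⊤ : Subgroup ↥G0) ≃* (G0.map (MulAut.conj y1).toMonoidHom).subgroupOf G0 where
  toFun a := ⟨⟨y1 * ((a : ↥G0) : H) * y1⁻¹,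
      hle ⟨(a : ↥G0), (a : ↥G0).2, by
        simp only [MulEquiv.coe_toMonoidHom, MulAut.conj_apply]⟩⟩,
    by
      rw [Subgroup.mem_subgroupOf]
      exact ⟨(a : ↥G0), (a : ↥G0).2, by
        simp only [MulEquiv.coe_toMonoidHom, MulAut.conj_apply]⟩⟩
  invFun b := ⟨⟨y1⁻¹ * ((b : ↥G0) : H) * y1, by
      have hbK : ((b : ↥G0) : H) ∈ G0.map (MulAut.conj y1).toMonoidHom :=
        (Subgroup.mem_subgroupOf).1 b.2
      obtain ⟨h, hh0, heq⟩ := hbK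
      simp only [MulEquiv.coe_toMonoidHom, MulAut.conj_apply] at heq
      rw [← heq]
      have hh3 : y1⁻¹ * (y1 * h * y1⁻¹) * y1 = h := by group
      rw [hh3]; exact hh0⟩, Subgroup.mem_top _⟩
  left_inv a := by
    apply Subtype.ext; apply Subtype.ext
    show y1⁻¹ * (y1 * ((a : ↥G0) : H) * y1⁻¹) * y1 = ((a : ↥G0) : H)
    group
  right_inv b := by
    apply Subtype.ext; apply Subtype.ext
    show y1 * (y1⁻¹ * ((b : ↥G0) : H) * y1) * y1⁻¹ = ((b : ↥G0) : H)
    group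
  map_mul' a b := by
    apply Subtype.ext; apply Subtype.ext
    show y1 * (((a : ↥G0) : H) * ((b : ↥G0) : H)) * y1⁻¹ =
      (y1 * ((a : ↥G0) : H) * y1⁻¹) * (y1 * ((b : ↥G0) : H) * y1⁻¹)
    group

lemma conjEquiv_apply (G0 : Subgroup H) (y1 : H)
    (hle : G0.map (MulAut.conj y1).toMonoidHom ≤ G0) (a : (⊤ : Subgroup ↥G0)) :
    ((conjEquiv G0 y1 hle a : ↥G0) : H) = y1 * ((a : ↥G0) : H) * y1⁻¹ := rfl

end ConjEquiv

theorem Gy_HNN_over_G0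
    (n : ℕ) (hn : 2 ≤ n) (x : Fin n → Γ n) (hx : IsXFamily n hn x)
    (ycore : Γ n) (hy : IsY n hn ycore)
    (y10 : Γ n) (hy10 : IsPrefixMap [⟨n - 1, by omega⟩, ⟨0, by omega⟩] ycore y10)
    (y1 : Γ n) (hy1 : IsPrefixMap [⟨n - 1, by omega⟩] ycore y1)
    (G0 : Subgroup (Γ n)) (hG0 : G0 = Subgroup.closure (Set.range x ∪ {y10}))
    (Gy : Subgroup (Γ n)) (hGy : Gy = Subgroup.closure (Set.range x ∪ {y10, y1})) :
    Subgroup.closure ((G0 : Set (Γ n)) ∪ {y1}) = Gy ∧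
    G0.map (MulAut.conj (y1)).toMonoidHom < G0 ∧
    ∃ (B : Subgroup ↥G0) (φ : (⊤ : Subgroup ↥G0) ≃* B),
      (∀ a : (⊤ : Subgroup ↥G0),
        ((φ a : ↥G0) : Γ n) = y1 * ((a : ↥G0) : Γ n) * (y1)⁻¹) ∧
      ∃ f : HNNExtension ↥G0 ⊤ B φ →* Γ n,
        (∀ h : ↥G0, f (HNNExtension.of h) = (h : Γ n)) ∧
        f HNNExtension.t = y1 ∧
        Function.Injective f ∧ f.range = Gy := by
  have hg' : IsX0 n hn (x (lO hn)) := hx.1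
  have hh' : IsXLast n hn (x (lO hn)) (x (lZ hn)) := hx.2.2
  have hmid := hx.2.1
  have hy10' : IsPrefixMap [lZ hn, lO hn] ycore y10 := hy10
  have hy1' : IsPrefixMap [lZ hn] ycore y1 := hy1
  have hconj := conj_mem_G0 hn hg' hh' hmid hy hy10' hy1'
  have hSle : Subgroup.closure (Set.range x ∪ {y10}) ≤ Sinv hn :=
    G0_le_Sinv hn hg' hh' hmid hy10'
  subst hG0 hGy
  -- Part 1
  have hset : (Set.range x ∪ {y10}) ∪ {y1} = Set.range x ∪ {y10, y1} := by
    rw [Set.union_assoc, Set.singleton_union]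
  have part1 : Subgroup.closure
        ((Subgroup.closure (Set.range x ∪ {y10}) : Set (Γ n)) ∪ {y1}) =
      Subgroup.closure (Set.range x ∪ {y10, y1}) := by
    rw [Subgroup.closure_union, Subgroup.closure_eq, ← Subgroup.closure_union, hset]
  refine ⟨part1, ?_, ?_⟩
  -- Part 2
  · have hmaple : (Subgroup.closure (Set.range x ∪ {y10})).map
        (MulAut.conj y1).toMonoidHom ≤ Subgroup.closure (Set.range x ∪ {y10}) := by
      rintro g ⟨h, hh0, rfl⟩
      simpa only [MulEquiv.coe_toMonoidHom, MulAut.conj_apply] using hconj h hh0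
    have hx0mem : x (lO hn) ∈ Subgroup.closure (Set.range x ∪ {y10}) :=
      Subgroup.subset_closure (Or.inl ⟨_, rfl⟩)
    refine lt_of_le_of_ne hmaple fun hEq => ?_
    have hx0map : x (lO hn) ∈ (Subgroup.closure (Set.range x ∪ {y10})).map
        (MulAut.conj y1).toMonoidHom := by rw [hEq]; exact hx0mem
    obtain ⟨h, hh0, heq⟩ := hx0map
    have hh2 : h = y1⁻¹ * x (lO hn) * y1 := by
      simp only [MulEquiv.coe_toMonoidHom, MulAut.conj_apply] at heq
      rw [← heq]; group
    exact conj_x0_notMem_Sinv hn hg' hy hy1' (hh2 ▸ hSle hh0)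
  -- Part 3
  · set G0 := Subgroup.closure (Set.range x ∪ {y10}) with hG0d
    have hmaple : G0.map (MulAut.conj y1).toMonoidHom ≤ G0 := by
      rintro g ⟨h, hh0, rfl⟩
      simpa only [MulEquiv.coe_toMonoidHom, MulAut.conj_apply] using hconj h hh0
    have hmemmap : ∀ a : ↥G0, y1 * (a : Γ n) * y1⁻¹ ∈
        G0.map (MulAut.conj y1).toMonoidHom :=
      fun a => ⟨a, a.2, by simp only [MulEquiv.coe_toMonoidHom, MulAut.conj_apply]⟩
    refine ⟨(G0.map (MulAut.conj y1).toMonoidHom).subgroupOf G0,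
      conjEquiv G0 y1 hmaple, fun a => rfl, ?_⟩
    have hcomp : ∀ a : (⊤ : Subgroup ↥G0),
        y1 * G0.subtype ↑a = G0.subtype ↑(conjEquiv G0 y1 hmaple a) * y1 := by
      intro a
      show y1 * ((a : ↥G0) : Γ n) = (y1 * ((a : ↥G0) : Γ n) * y1⁻¹) * y1
      group
    refine ⟨HNNExtension.lift G0.subtype y1 hcomp, fun h => ?_, ?_, ?_, ?_⟩
    · exact HNNExtension.lift_of _ _ _ h
    · exact HNNExtension.lift_t _ _ _
    · -- injectivity
      rw [injective_iff_map_eq_one]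
      intro w hw
      obtain ⟨m, k, g, rfl⟩ := hnn_normal_form (conjEquiv G0 y1 hmaple) w
      rw [map_mul, map_mul, map_inv, map_pow, map_pow, HNNExtension.lift_of,
        HNNExtension.lift_t] at hw
      have hgeq : (g : Γ n) = y1 ^ m * (y1 ^ k)⁻¹ := by
        have h1 : G0.subtype g = (y1 ^ m) * 1 * (y1 ^ k)⁻¹ := by
          rw [← hw]; group
        simpa using h1
      rcases le_or_gt k m with hle | hlt
      · obtain ⟨d, rfl⟩ : ∃ d, m = k + d := ⟨m - k, by omega⟩
        have hgd : (g : Γ n) = y1 ^ d := by rw [hgeq, pow_add]; group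
        rcases Nat.eq_zero_or_pos d with rfl | hd
        · have hg1 : g = 1 := by
            apply Subtype.ext; rw [hgd, pow_zero]; rfl
          rw [hg1, map_one]
          group
        · exfalso
          have hmem : y1 ^ d ∈ G0 := by rw [← hgd]; exact g.2
          exact y1_pow_notMem_Sinv hn hy hy1' hd (hSle hmem)
      · obtain ⟨d, rfl⟩ : ∃ d, k = m + d := ⟨k - m, by omega⟩
        exfalso
        have hgd : (g : Γ n) = (y1 ^ d)⁻¹ := by rw [hgeq, pow_add]; group
        have hmem : y1 ^ d ∈ G0 := by
          have hi := inv_mem g.2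
          rwa [hgd, inv_inv] at hi
        exact y1_pow_notMem_Sinv hn hy hy1' (by omega) (hSle hmem)
    · -- range
      apply le_antisymm
      · rintro _ ⟨w, rfl⟩
        refine HNNExtension.induction_on w ?_ ?_ ?_ ?_
        · intro g
          rw [HNNExtension.lift_of]
          have hsub : G0 ≤ Subgroup.closure (Set.range x ∪ {y10, y1}) := by
            rw [hG0d]
            apply Subgroup.closure_mono
            rw [← hset]
            exact Set.subset_union_left
          exact hsub g.2
        · rw [HNNExtension.lift_t]
          exact Subgroup.subset_closure (Or.inr (Or.inr rfl))
        · intro a b ha hb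
          rw [map_mul]; exact mul_mem ha hb
        · intro a ha
          rw [map_inv]; exact inv_mem ha
      · rw [Subgroup.closure_le]
        rintro g (⟨i, rfl⟩ | hgy)
        · exact ⟨HNNExtension.of ⟨x i, Subgroup.subset_closure (Or.inl ⟨i, rfl⟩)⟩,
            HNNExtension.lift_of _ _ _ _⟩
        · rcases Set.mem_insert_iff.1 hgy with h1 | h1
          · rw [h1]
            exact ⟨HNNExtension.of ⟨y10, Subgroup.subset_closure (Or.inr rfl)⟩,
              HNNExtension.lift_of _ _ _ _⟩
          · rw [Set.mem_singleton_iff.1 h1]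
            exact ⟨HNNExtension.t, HNNExtension.lift_t _ _ _⟩
end LM
end
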